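/- arXiv:1204.4429 — 2 statements merged into one kernel-verified Lean document; each statement's English description precedes it below -/
import Mathlib

section
/- Let μ be a finite nonnegative Borel measure on (ℝ^d)^k and γ > 0. Suppose that the Fourier transform of μ satisfies |μ̂(-ξ, ξ, 0, …, 0)| ≤ C(1+|ξ|)^{-γ} for all ξ ∈ ℝ^d. Then for any γ₁, γ₂ > 0 with γ₁ + γ₂ = γ and any nonnegative Schwartz functions f₁, …, f_k on ℝ^d, the multilinear convolution T_μ(f₁,…,f_k)(x) = ∫⋯∫ f₁(x-u¹)⋯f_k(x-u^k) dμ(u¹,…,u^k) satisfies ‖T_μ(f₁,…,f_k)‖_{L¹(ℝ^d)} ≲ (∏_{j=3}^k ‖f_j‖_∞) · (∫ |f̂₁(ξ)|² (1+|ξ|)^{-2γ₁} dξ)^{1/2} · (∫ |f̂₂(ξ)|² (1+|ξ|)^{-2γ₂} dξ)^{1/2}. -/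
open MeasureTheory
open scoped BigOperators

/-- `negExp r = e^{-2πir}`. -/
noncomputable def negExp (r : ℝ) : ℂ := Complex.exp (Complex.I * ((-2) * Real.pi * r : ℝ))

/-- The Fourier transform of a real-valued function on `ℝ^d`. -/
noncomputable def ftR {d : ℕ} (f : EuclideanSpace ℝ (Fin d) → ℝ)
    (ξ : EuclideanSpace ℝ (Fin d)) : ℂ :=
  ∫ x, negExp (inner ℝ x ξ : ℝ) * (f x : ℂ)


open MeasureTheory Complex Real SchwartzMap
open scoped FourierTransform RealInnerProductSpace

lemma negExp_eq (r : ℝ) : negExp r = (Real.fourierChar (-r) : ℂ) := by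
  rw [Real.fourierChar_apply, negExp]
  congr 1
  push_cast
  ring

lemma norm_negExp (r : ℝ) : ‖negExp r‖ = 1 := by
  rw [negExp_eq]
  exact Circle.norm_coe _

lemma continuous_negExp : Continuous negExp := by
  unfold negExp
  fun_prop

lemma ftR_eq {d : ℕ} (f : EuclideanSpace ℝ (Fin d) → ℝ) :
    ftR f = 𝓕 (fun x => (f x : ℂ)) := by
  ext ξ
  rw [Real.fourier_eq', ftR]
  congr 1 with x
  rw [smul_eq_mul]
  congr 1
  rw [negExp]
  push_cast
  ring_nf

variable {d : ℕ}

/-- Complexification of a real Schwartz function. -/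
noncomputable def toC (g : SchwartzMap (EuclideanSpace ℝ (Fin d)) ℝ) :
    SchwartzMap (EuclideanSpace ℝ (Fin d)) ℂ :=
  SchwartzMap.bilinLeftCLM (ContinuousLinearMap.lsmul ℝ ℝ : ℝ →L[ℝ] ℂ →L[ℝ] ℂ)
    (Function.HasTemperateGrowth.const (1 : ℂ)) g

@[simp] lemma toC_apply (g : SchwartzMap (EuclideanSpace ℝ (Fin d)) ℝ)
    (x : EuclideanSpace ℝ (Fin d)) : toC g x = (g x : ℂ) := by
  show (g x : ℝ) • (1 : ℂ) = (g x : ℂ)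
  rw [Complex.real_smul, mul_one]

lemma conj_fourier (f : EuclideanSpace ℝ (Fin d) → ℝ) (ξ : EuclideanSpace ℝ (Fin d)) :
    (starRingEnd ℂ) (𝓕 (fun x => (f x : ℂ)) ξ) = 𝓕⁻ (fun x => (f x : ℂ)) ξ := by
  rw [Real.fourier_eq', Real.fourierInv_eq', ← integral_conj]
  congr 1 with x
  simp only [smul_eq_mul, map_mul, ← Complex.exp_conj, Complex.conj_ofReal, map_mul,
    Complex.conj_I]
  congr 1
  push_cast
  ring_nf

lemma ft_translate (φ : EuclideanSpace ℝ (Fin d) → ℂ) (b : EuclideanSpace ℝ (Fin d)) :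
    𝓕 (fun x => φ (x - b)) = fun w => (Real.fourierChar (-⟪b, w⟫) : ℂ) * 𝓕 φ w := by
  have h := VectorFourier.fourierIntegral_comp_add_right Real.fourierChar
    (volume : Measure (EuclideanSpace ℝ (Fin d))) (innerₗ (EuclideanSpace ℝ (Fin d))) φ (-b)
  have h2 : (φ ∘ fun v => v + (-b)) = fun x => φ (x - b) := by
    funext x; simp [sub_eq_add_neg]
  rw [h2] at h
  show VectorFourier.fourierIntegral Real.fourierChar volume
      (innerₗ (EuclideanSpace ℝ (Fin d))) (fun x => φ (x - b)) = _
  rw [h]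
  funext w
  rw [Circle.smul_def]
  congr 2
  congr 1
  exact inner_neg_left b w

lemma ftinv_translate (φ : EuclideanSpace ℝ (Fin d) → ℂ) (b w : EuclideanSpace ℝ (Fin d)) :
    𝓕⁻ (fun x => φ (x - b)) w = (Real.fourierChar ⟪b, w⟫ : ℂ) * 𝓕⁻ φ w := by
  rw [Real.fourierInv_eq_fourier_neg, ft_translate]
  simp only [inner_neg_right, neg_neg]
  rw [Real.fourierInv_eq_fourier_neg]

lemma continuous_phase {α : Type*} [TopologicalSpace α] {c : α → ℝ} (hc : Continuous c) :
    Continuous fun w => (Real.fourierChar (c w) : ℂ) :=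
  continuous_subtype_val.comp (Real.continuous_fourierChar.comp hc)

lemma conj_fourier' (h : SchwartzMap (EuclideanSpace ℝ (Fin d)) ℝ)
    (ξ : EuclideanSpace ℝ (Fin d)) :
    (starRingEnd ℂ) (𝓕 (⇑(toC h)) ξ) = 𝓕⁻ (⇑(toC h)) ξ := by
  have : ⇑(toC h) = fun x => ((h x : ℝ) : ℂ) := by funext x; exact toC_apply h x
  rw [this]
  exact conj_fourier _ ξ

lemma W_eq (g h : SchwartzMap (EuclideanSpace ℝ (Fin d)) ℝ) (a b : EuclideanSpace ℝ (Fin d)) :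
    ((∫ x, g (x - a) * h (x - b) : ℝ) : ℂ)
      = ∫ ξ, 𝓕 (⇑(toC g)) ξ * (starRingEnd ℂ) (𝓕 (⇑(toC h)) ξ)
          * negExp (⟪a, ξ⟫ - ⟪b, ξ⟫) := by
  set Gt : EuclideanSpace ℝ (Fin d) → ℂ := fun x => toC g (x - a) with hGt_def
  set Ht : EuclideanSpace ℝ (Fin d) → ℂ := fun x => toC h (x - b) with hHt_def
  have hGt_int : Integrable Gt := ((toC g).integrable).comp_sub_right a
  have hHt_int : Integrable Ht := ((toC h).integrable).comp_sub_right b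
  have hHt_cont : Continuous Ht := (toC h).continuous.comp (continuous_id.sub continuous_const)
  have hFH_int : Integrable (𝓕 ⇑(toC h)) := by
    have := (SchwartzMap.fourierTransformCLM ℂ (toC h)).integrable (μ := volume)
    rw [SchwartzMap.fourierTransformCLM_apply] at this; exact this
  have hFG_int : Integrable (𝓕 ⇑(toC g)) := by
    have := (SchwartzMap.fourierTransformCLM ℂ (toC g)).integrable (μ := volume)
    rw [SchwartzMap.fourierTransformCLM_apply] at this; exact this
  have hphase : ∀ r : ℝ, ‖(Real.fourierChar r : ℂ)‖ = 1 := fun r => by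
    exact Circle.norm_coe _
  have hFHt : 𝓕 Ht = fun w => (Real.fourierChar (-⟪b, w⟫) : ℂ) * 𝓕 ⇑(toC h) w :=
    ft_translate _ b
  have hFHt_int : Integrable (𝓕 Ht) := by
    rw [hFHt]
    refine Integrable.bdd_mul hFH_int ?_ (ae_of_all _ fun w => le_of_eq (hphase _))
    exact (continuous_phase ((continuous_const.inner continuous_id).neg)).aestronglyMeasurable
  have hinv : 𝓕 (𝓕⁻ Ht) = Ht := hHt_cont.fourier_fourierInv_eq hHt_int hFHt_int
  have hP_eq : 𝓕⁻ Ht = fun w => (Real.fourierChar ⟪b, w⟫ : ℂ) * 𝓕⁻ ⇑(toC h) w := by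
    funext w; exact ftinv_translate _ b w
  have hFHinv_int : Integrable (𝓕⁻ ⇑(toC h)) := by
    have : (𝓕⁻ ⇑(toC h)) = fun w => 𝓕 ⇑(toC h) (-w) := by
      funext w; exact Real.fourierInv_eq_fourier_neg _ w
    rw [this]
    exact hFH_int.comp_neg
  have hP_int : Integrable (𝓕⁻ Ht) := by
    rw [hP_eq]
    refine Integrable.bdd_mul hFHinv_int ?_ (ae_of_all _ fun w => le_of_eq (hphase _))
    exact (continuous_phase (continuous_const.inner continuous_id)).aestronglyMeasurable
  have hflipL : (innerₗ (EuclideanSpace ℝ (Fin d))).flip = innerₗ (EuclideanSpace ℝ (Fin d)) := by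
    apply LinearMap.ext; intro x; apply LinearMap.ext; intro y
    simp only [LinearMap.flip_apply]
    exact real_inner_comm x y
  have flip := VectorFourier.integral_fourierIntegral_smul_eq_flip
    (e := Real.fourierChar) (L := innerₗ (EuclideanSpace ℝ (Fin d)))
    (μ := (volume : Measure (EuclideanSpace ℝ (Fin d))))
    (ν := (volume : Measure (EuclideanSpace ℝ (Fin d))))
    Real.continuous_fourierChar continuous_inner hP_int hGt_int
  rw [hflipL] at flip
  have hunfold : ∀ φ : EuclideanSpace ℝ (Fin d) → ℂ,
      VectorFourier.fourierIntegral Real.fourierChar volume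
        (innerₗ (EuclideanSpace ℝ (Fin d))) φ = 𝓕 φ := fun φ => rfl
  rw [hunfold, hunfold, hinv] at flip
  calc ((∫ x, g (x - a) * h (x - b) : ℝ) : ℂ)
      = ∫ x, Gt x * Ht x := by
        rw [show ((∫ x, g (x - a) * h (x - b) : ℝ) : ℂ)
            = ∫ x, ((g (x - a) * h (x - b) : ℝ) : ℂ) from (integral_ofReal).symm]
        congr 1 with x
        simp [hGt_def, hHt_def]
    _ = ∫ ξ, Ht ξ • Gt ξ := by
        congr 1 with ξ
        rw [smul_eq_mul, mul_comm]
    _ = ∫ x, (𝓕⁻ Ht) x • 𝓕 Gt x := flip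
    _ = ∫ ξ, 𝓕 (⇑(toC g)) ξ * (starRingEnd ℂ) (𝓕 (⇑(toC h)) ξ)
          * negExp (⟪a, ξ⟫ - ⟪b, ξ⟫) := by
        congr 1 with ξ
        rw [hP_eq, smul_eq_mul]
        have h1 : 𝓕 Gt ξ = (Real.fourierChar (-⟪a, ξ⟫) : ℂ) * 𝓕 ⇑(toC g) ξ := by
          rw [hGt_def]
          exact congrFun (ft_translate _ a) ξ
        rw [h1, conj_fourier' h ξ]
        have h2 : negExp (⟪a, ξ⟫ - ⟪b, ξ⟫)
            = (Real.fourierChar (⟪b, ξ⟫ : ℝ) : ℂ) * (Real.fourierChar (-⟪a, ξ⟫) : ℂ) := by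
          rw [negExp_eq, ← Circle.coe_mul, ← AddChar.map_add_eq_mul]
          norm_num
          ring_nf
        rw [h2]
        ring


lemma filter_not_eq {k : ℕ} (hk : 2 ≤ k) :
    Finset.univ.filter (fun j : Fin k => ¬ 2 ≤ (j : ℕ))
      = {(⟨0, by omega⟩ : Fin k), ⟨1, by omega⟩} := by
  ext j
  simp only [Finset.mem_filter, Finset.mem_univ, true_and, Finset.mem_insert,
    Finset.mem_singleton, Fin.ext_iff]
  omega

lemma sum_if {k : ℕ} (hk : 2 ≤ k) (u : Fin k → EuclideanSpace ℝ (Fin d))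
    (ξ : EuclideanSpace ℝ (Fin d)) :
    ∑ j, (inner ℝ (u j) (if (j : ℕ) = 0 then -ξ else if (j : ℕ) = 1 then ξ else 0) : ℝ)
      = ⟪u ⟨0, by omega⟩, -ξ⟫ + ⟪u ⟨1, by omega⟩, ξ⟫ := by
  rw [← Finset.sum_filter_add_sum_filter_not Finset.univ (fun j : Fin k => 2 ≤ (j : ℕ))]
  have h1 : ∑ j ∈ Finset.univ.filter (fun j : Fin k => 2 ≤ (j : ℕ)),
      (inner ℝ (u j) (if (j : ℕ) = 0 then -ξ else if (j : ℕ) = 1 then ξ else 0) : ℝ) = 0 := by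
    apply Finset.sum_eq_zero
    intro j hj
    simp only [Finset.mem_filter] at hj
    rw [if_neg (by omega), if_neg (by omega)]
    exact inner_zero_right _
  rw [h1, zero_add, filter_not_eq hk, Finset.sum_insert (by simp [Fin.ext_iff]),
    Finset.sum_singleton]
  norm_num

lemma prod_split {k : ℕ} (hk : 2 ≤ k) (F : Fin k → ℝ) :
    ∏ j, F j = (∏ j ∈ Finset.univ.filter (fun j : Fin k => 2 ≤ (j : ℕ)), F j)
      * (F ⟨0, by omega⟩ * F ⟨1, by omega⟩) := by
  rw [← Finset.prod_filter_mul_prod_filter_not Finset.univ (fun j : Fin k => 2 ≤ (j : ℕ)),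
    filter_not_eq hk, Finset.prod_insert (by simp [Fin.ext_iff]), Finset.prod_singleton]

section Main
variable {d k : ℕ}

set_option maxHeartbeats 2000000 in
theorem stmt0' (hd : 1 ≤ d) (hk : 2 ≤ k)
    (μ : Measure (Fin k → EuclideanSpace ℝ (Fin d))) [IsFiniteMeasure μ]
    (γ C : ℝ) (hγ : 0 < γ) (hC : 0 < C)
    (hdecay : ∀ ξ : EuclideanSpace ℝ (Fin d),
      ‖∫ u, negExp (∑ j, (inner ℝ (u j)
          (if (j : ℕ) = 0 then -ξ else if (j : ℕ) = 1 then ξ else 0) : ℝ)) ∂μ‖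
        ≤ C * (1 + ‖ξ‖) ^ (-γ))
    (γ₁ γ₂ : ℝ) (hγ₁ : 0 < γ₁) (hγ₂ : 0 < γ₂) (hsum : γ₁ + γ₂ = γ) :
    ∃ C' : ℝ, 0 < C' ∧
      ∀ f : Fin k → SchwartzMap (EuclideanSpace ℝ (Fin d)) ℝ,
        (∀ j x, 0 ≤ f j x) →
        ∫ x, |∫ u, ∏ j, f j (x - u j) ∂μ| ≤
          C' * (∏ j ∈ Finset.univ.filter (fun j : Fin k => 2 ≤ (j : ℕ)), ⨆ x, f j x) *
            Real.sqrt (∫ ξ : EuclideanSpace ℝ (Fin d),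
              ‖ftR (fun x => f ⟨0, Nat.lt_of_lt_of_le (by decide) hk⟩ x) ξ‖ ^ 2 * (1 + ‖ξ‖) ^ ((-2) * γ₁)) *
            Real.sqrt (∫ ξ : EuclideanSpace ℝ (Fin d),
              ‖ftR (fun x => f ⟨1, Nat.lt_of_lt_of_le (by decide) hk⟩ x) ξ‖ ^ 2 * (1 + ‖ξ‖) ^ ((-2) * γ₂)) := by
  refine ⟨C, hC, ?_⟩
  intro f hf
  have hk0 : (0 : ℕ) < k := by omega
  have hk1 : (1 : ℕ) < k := by omega
  set i0 : Fin k := ⟨0, hk0⟩ with hi0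
  set i1 : Fin k := ⟨1, hk1⟩ with hi1
  set g : SchwartzMap (EuclideanSpace ℝ (Fin d)) ℝ := f i0 with hg
  set h : SchwartzMap (EuclideanSpace ℝ (Fin d)) ℝ := f i1 with hh
  set FG : EuclideanSpace ℝ (Fin d) → ℂ := 𝓕 ⇑(toC g) with hFG
  set FH : EuclideanSpace ℝ (Fin d) → ℂ := 𝓕 ⇑(toC h) with hFH
  -- basic facts about Schwartz functions
  have hbdd : ∀ φ : SchwartzMap (EuclideanSpace ℝ (Fin d)) ℂ, ∃ M, ∀ x, ‖φ x‖ ≤ M := by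
    intro φ
    obtain ⟨M, hM⟩ := φ.decay 0 0
    exact ⟨M, fun x => by simpa using hM.2 x⟩
  have hbddR : ∀ φ : SchwartzMap (EuclideanSpace ℝ (Fin d)) ℝ, ∃ M, ∀ x, ‖φ x‖ ≤ M := by
    intro φ
    obtain ⟨M, hM⟩ := φ.decay 0 0
    exact ⟨M, fun x => by simpa using hM.2 x⟩
  have hFG_sch : FG = ⇑(SchwartzMap.fourierTransformCLM ℂ (toC g)) := by
    rw [SchwartzMap.fourierTransformCLM_apply]; rfl
  have hFH_sch : FH = ⇑(SchwartzMap.fourierTransformCLM ℂ (toC h)) := by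
    rw [SchwartzMap.fourierTransformCLM_apply]; rfl
  have hFG_cont : Continuous FG := by
    rw [hFG_sch]; exact (SchwartzMap.fourierTransformCLM ℂ (toC g)).continuous
  have hFH_cont : Continuous FH := by
    rw [hFH_sch]; exact (SchwartzMap.fourierTransformCLM ℂ (toC h)).continuous
  have hFG_int : Integrable FG volume := by
    rw [hFG_sch]; exact (SchwartzMap.fourierTransformCLM ℂ (toC g)).integrable
  have hFH_int : Integrable FH volume := by
    rw [hFH_sch]; exact (SchwartzMap.fourierTransformCLM ℂ (toC h)).integrable
  have hFG_bdd : ∃ M, ∀ x, ‖FG x‖ ≤ M := by rw [hFG_sch]; exact hbdd _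
  have hFH_bdd : ∃ M, ∀ x, ‖FH x‖ ≤ M := by rw [hFH_sch]; exact hbdd _
  have hnorms : Integrable (fun ξ => ‖FG ξ‖ * ‖FH ξ‖) volume :=
    Integrable.bdd_mul (c := hFG_bdd.choose) hFH_int.norm hFG_cont.norm.aestronglyMeasurable
      (ae_of_all _ fun x => by simpa using hFG_bdd.choose_spec x)
  -- sup bounds
  have hbddAbove : ∀ j, BddAbove (Set.range (f j)) := by
    intro j
    obtain ⟨M, hM⟩ := hbddR (f j)
    exact ⟨M, by rintro _ ⟨y, rfl⟩; exact le_trans (le_abs_self _) (hM y)⟩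
  have hsup : ∀ j y, f j y ≤ ⨆ x, f j x := fun j y => le_ciSup (hbddAbove j) y
  have hsup_nn : ∀ j, 0 ≤ ⨆ x, f j x := fun j => le_trans (hf j 0) (hsup j 0)
  set B : ℝ := ∏ j ∈ Finset.univ.filter (fun j : Fin k => 2 ≤ (j : ℕ)), ⨆ x, f j x with hB
  have hB_nn : 0 ≤ B := Finset.prod_nonneg fun j _ => hsup_nn j
  -- pointwise product bound
  have hprod : ∀ (x : EuclideanSpace ℝ (Fin d)) (u : Fin k → EuclideanSpace ℝ (Fin d)),
      ∏ j, f j (x - u j) ≤ B * (g (x - u i0) * h (x - u i1)) := by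
    intro x u
    rw [prod_split hk (fun j => f j (x - u j))]
    refine mul_le_mul_of_nonneg_right ?_
      (mul_nonneg (hf _ _) (hf _ _))
    exact Finset.prod_le_prod (fun j _ => hf j _) (fun j _ => hsup j _)
  -- the inner function W'
  set W' : (Fin k → EuclideanSpace ℝ (Fin d)) → ℝ :=
    fun u => ∫ x, g (x - u i0) * h (x - u i1) with hW'
  have hW_nn : ∀ u, 0 ≤ W' u := fun u =>
    integral_nonneg fun x => mul_nonneg (hf _ _) (hf _ _)
  -- the kernel Ψ
  set Ψ : ((Fin k → EuclideanSpace ℝ (Fin d)) × EuclideanSpace ℝ (Fin d)) → ℂ :=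
    fun p => FG p.2 * (starRingEnd ℂ) (FH p.2) * negExp (⟪p.1 i0, p.2⟫ - ⟪p.1 i1, p.2⟫) with hΨ
  have hΨ_cont : Continuous Ψ := by
    apply Continuous.mul
    · exact ((hFG_cont.comp continuous_snd).mul
        (Complex.continuous_conj.comp (hFH_cont.comp continuous_snd)))
    · exact continuous_negExp.comp
        ((((continuous_apply i0).comp continuous_fst).inner continuous_snd).sub
          (((continuous_apply i1).comp continuous_fst).inner continuous_snd))
  have hΨ_norm : ∀ p, ‖Ψ p‖ = ‖FG p.2‖ * ‖FH p.2‖ := by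
    intro p
    rw [hΨ]
    simp only [norm_mul, RCLike.norm_conj, norm_negExp, mul_one]
  have hΨ_int : Integrable Ψ (μ.prod volume) := by
    refine Integrable.mono' ((integrable_const (1:ℝ)).mul_prod hnorms)
      hΨ_cont.aestronglyMeasurable ?_
    filter_upwards with p
    rw [hΨ_norm p, one_mul]
  have hW_eq : ∀ u, ((W' u : ℝ) : ℂ) = ∫ ξ, Ψ (u, ξ) := by
    intro u
    rw [hW']
    exact W_eq g h (u i0) (u i1)
  have hWc_int : Integrable (fun u => ∫ ξ, Ψ (u, ξ)) μ := hΨ_int.integral_prod_left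
  have hW_int : Integrable W' μ := by
    refine (hWc_int.re).congr (Filter.Eventually.of_forall fun u => ?_)
    show RCLike.re (∫ ξ, Ψ (u, ξ)) = W' u
    rw [← hW_eq u]
    simp
  -- the measure Fourier transform
  set m : EuclideanSpace ℝ (Fin d) → ℂ :=
    fun ξ => ∫ u, negExp (⟪u i0, ξ⟫ - ⟪u i1, ξ⟫) ∂μ with hm
  have hm_bound : ∀ ξ, ‖m ξ‖ ≤ C * (1 + ‖ξ‖) ^ (-γ) := by
    intro ξ
    have h0 := hdecay (-ξ)
    rw [norm_neg] at h0
    refine le_trans (le_of_eq ?_) h0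
    rw [hm]
    congr 1
    apply integral_congr_ae
    filter_upwards with u
    congr 1
    rw [sum_if hk u (-ξ)]
    simp only [neg_neg]
    rw [inner_neg_right]
    ring
  -- Step 1 : reduce to the bilinear quantity
  set T : EuclideanSpace ℝ (Fin d) → ℝ := fun x => ∫ u, ∏ j, f j (x - u j) ∂μ with hT
  have hT_nn : ∀ x, 0 ≤ T x := fun x =>
    integral_nonneg fun u => Finset.prod_nonneg fun j _ => hf j _
  set Φr : EuclideanSpace ℝ (Fin d) × (Fin k → EuclideanSpace ℝ (Fin d)) → ℝ :=
    fun p => ∏ j, f j (p.1 - p.2 j) with hΦr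
  have hΦr_cont : Continuous Φr := by
    apply continuous_finset_prod
    intro j _
    exact ((f j).continuous).comp (continuous_fst.sub ((continuous_apply j).comp continuous_snd))
  have hT_meas : AEStronglyMeasurable T volume :=
    hΦr_cont.aestronglyMeasurable.integral_prod_right'
  have hu_int : ∀ x, Integrable (fun u => ∏ j, f j (x - u j)) μ := by
    intro x
    refine Integrable.mono' (integrable_const (∏ j, ⨆ y, f j y)) ?_ ?_
    · exact (hΦr_cont.comp (Continuous.prodMk_right x)).aestronglyMeasurable
    · filter_upwards with u
      rw [Real.norm_eq_abs, _root_.abs_of_nonneg (Finset.prod_nonneg fun j _ => hf j _)]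
      exact Finset.prod_le_prod (fun j _ => hf j _) (fun j _ => hsup j _)
  have hGH_int : ∀ u : Fin k → EuclideanSpace ℝ (Fin d),
      Integrable (fun x => g (x - u i0) * h (x - u i1)) volume := by
    intro u
    refine Integrable.bdd_mul (c := (hbddR g).choose) ((h.integrable).comp_sub_right (u i1)) ?_ ?_
    · exact (g.continuous.comp (continuous_id.sub continuous_const)).aestronglyMeasurable
    · exact ae_of_all _ fun x => (hbddR g).choose_spec _
  have hBW_int : Integrable (fun u => B * W' u) μ := hW_int.const_mul B
  have hBW_nn : (0:ℝ) ≤ ∫ u, B * W' u ∂μ :=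
    integral_nonneg fun u => mul_nonneg hB_nn (hW_nn u)
  have step1 : ∫ x, |T x| ≤ B * ∫ u, W' u ∂μ := by
    have hle : (∫⁻ x, ENNReal.ofReal (T x)) ≤ ∫⁻ u, ENNReal.ofReal (B * W' u) ∂μ := by
      calc (∫⁻ x, ENNReal.ofReal (T x))
          = ∫⁻ x, ∫⁻ u, ENNReal.ofReal (∏ j, f j (x - u j)) ∂μ := by
            apply lintegral_congr
            intro x
            exact ofReal_integral_eq_lintegral_ofReal (hu_int x)
              (Filter.Eventually.of_forall fun u => Finset.prod_nonneg fun j _ => hf j _)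
        _ = ∫⁻ u, ∫⁻ x, ENNReal.ofReal (∏ j, f j (x - u j)) ∂volume ∂μ := by
            apply lintegral_lintegral_swap
            exact (ENNReal.continuous_ofReal.comp hΦr_cont).aemeasurable
        _ ≤ ∫⁻ u, ∫⁻ x, ENNReal.ofReal (B * (g (x - u i0) * h (x - u i1))) ∂volume ∂μ := by
            refine lintegral_mono fun u => lintegral_mono fun x => ?_
            exact ENNReal.ofReal_le_ofReal (hprod x u)
        _ = ∫⁻ u, ENNReal.ofReal (B * W' u) ∂μ := by
            apply lintegral_congr
            intro u
            rw [← ofReal_integral_eq_lintegral_ofReal ((hGH_int u).const_mul B)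
              (Filter.Eventually.of_forall fun x => mul_nonneg hB_nn
                (mul_nonneg (hf _ _) (hf _ _)))]
            congr 1
            rw [hW']
            exact integral_const_mul B _
    have hfin : (∫⁻ u, ENNReal.ofReal (B * W' u) ∂μ) ≠ ⊤ := by
      rw [← ofReal_integral_eq_lintegral_ofReal hBW_int
        (Filter.Eventually.of_forall fun u => mul_nonneg hB_nn (hW_nn u))]
      exact ENNReal.ofReal_ne_top
    calc ∫ x, |T x| = ∫ x, T x := by
          apply integral_congr_ae
          filter_upwards with x
          exact _root_.abs_of_nonneg (hT_nn x)
      _ = (∫⁻ x, ENNReal.ofReal (T x)).toReal :=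
          integral_eq_lintegral_of_nonneg_ae (Filter.Eventually.of_forall hT_nn) hT_meas
      _ ≤ (∫⁻ u, ENNReal.ofReal (B * W' u) ∂μ).toReal := ENNReal.toReal_mono hfin hle
      _ = ∫ u, B * W' u ∂μ := by
          rw [← ofReal_integral_eq_lintegral_ofReal hBW_int
            (Filter.Eventually.of_forall fun u => mul_nonneg hB_nn (hW_nn u))]
          exact ENNReal.toReal_ofReal hBW_nn
      _ = B * ∫ u, W' u ∂μ := integral_const_mul B _
  -- Step 2 : Fourier side
  have swap2 : ∫ u, W' u ∂μ = (∫ ξ, FG ξ * (starRingEnd ℂ) (FH ξ) * m ξ).re := by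
    calc ∫ u, W' u ∂μ = (((∫ u, W' u ∂μ : ℝ) : ℂ)).re := (Complex.ofReal_re _).symm
      _ = (∫ u, ((W' u : ℝ) : ℂ) ∂μ).re := by
          rw [show (∫ u, ((W' u : ℝ) : ℂ) ∂μ) = ((∫ u, W' u ∂μ : ℝ) : ℂ) from integral_ofReal]
      _ = (∫ u, (∫ ξ, Ψ (u, ξ)) ∂μ).re := by
          congr 1
          exact integral_congr_ae (Filter.Eventually.of_forall fun u => hW_eq u)
      _ = (∫ ξ, (∫ u, Ψ (u, ξ) ∂μ)).re := by
          congr 1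
          exact integral_integral_swap hΨ_int
      _ = (∫ ξ, FG ξ * (starRingEnd ℂ) (FH ξ) * m ξ).re := by
          congr 1
          apply integral_congr_ae
          filter_upwards with ξ
          simp only [hΨ]
          simp_rw [mul_assoc]
          rw [integral_const_mul, integral_const_mul, hm]
      _ = (∫ ξ, FG ξ * (starRingEnd ℂ) (FH ξ) * m ξ).re := rfl
  have hw_cont : ∀ c : ℝ, Continuous fun ξ : EuclideanSpace ℝ (Fin d) => (1 + ‖ξ‖) ^ c :=
    fun c => Continuous.rpow_const (continuous_const.add continuous_norm)
      (fun ξ => Or.inl (by positivity))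
  have hw_le_one : ∀ (c : ℝ) (ξ : EuclideanSpace ℝ (Fin d)), 0 < c →
      (1 + ‖ξ‖) ^ (-c) ≤ 1 := fun c ξ hc =>
    Real.rpow_le_one_of_one_le_of_nonpos (by linarith [norm_nonneg ξ]) (by linarith)
  have hint2 : Integrable
      (fun ξ : EuclideanSpace ℝ (Fin d) => (C * (1 + ‖ξ‖) ^ (-γ)) * (‖FG ξ‖ * ‖FH ξ‖))
      volume := by
    refine Integrable.bdd_mul (c := C) hnorms ?_ (ae_of_all _ fun ξ => ?_)
    · exact (continuous_const.mul (hw_cont (-γ))).aestronglyMeasurable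
    · rw [Real.norm_eq_abs, abs_mul, _root_.abs_of_nonneg hC.le,
        _root_.abs_of_nonneg (Real.rpow_nonneg (by positivity) _)]
      nlinarith [hw_le_one γ ξ hγ, Real.rpow_nonneg (show (0:ℝ) ≤ 1 + ‖ξ‖ by positivity) (-γ)]
  have re_le : (∫ ξ, FG ξ * (starRingEnd ℂ) (FH ξ) * m ξ).re
      ≤ C * ∫ ξ, (‖FG ξ‖ * (1 + ‖ξ‖) ^ (-γ₁)) * (‖FH ξ‖ * (1 + ‖ξ‖) ^ (-γ₂)) := by
    calc (∫ ξ, FG ξ * (starRingEnd ℂ) (FH ξ) * m ξ).re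
        ≤ ‖∫ ξ, FG ξ * (starRingEnd ℂ) (FH ξ) * m ξ‖ := by
          exact Complex.re_le_norm _
      _ ≤ ∫ ξ, ‖FG ξ * (starRingEnd ℂ) (FH ξ) * m ξ‖ := norm_integral_le_integral_norm _
      _ = ∫ ξ, ‖FG ξ‖ * ‖FH ξ‖ * ‖m ξ‖ := by
          apply integral_congr_ae
          filter_upwards with ξ
          rw [norm_mul, norm_mul, RCLike.norm_conj]
      _ ≤ ∫ ξ, (C * (1 + ‖ξ‖) ^ (-γ)) * (‖FG ξ‖ * ‖FH ξ‖) := by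
          refine integral_mono_of_nonneg (Filter.Eventually.of_forall fun ξ => ?_) hint2
            (Filter.Eventually.of_forall fun ξ => ?_)
          · positivity
          · calc ‖FG ξ‖ * ‖FH ξ‖ * ‖m ξ‖
                ≤ ‖FG ξ‖ * ‖FH ξ‖ * (C * (1 + ‖ξ‖) ^ (-γ)) :=
                  mul_le_mul_of_nonneg_left (hm_bound ξ) (by positivity)
              _ = (C * (1 + ‖ξ‖) ^ (-γ)) * (‖FG ξ‖ * ‖FH ξ‖) := mul_comm _ _
      _ = C * ∫ ξ, (1 + ‖ξ‖) ^ (-γ) * (‖FG ξ‖ * ‖FH ξ‖) := by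
          simp_rw [mul_assoc]
          rw [integral_const_mul]
      _ = C * ∫ ξ, (‖FG ξ‖ * (1 + ‖ξ‖) ^ (-γ₁)) * (‖FH ξ‖ * (1 + ‖ξ‖) ^ (-γ₂)) := by
          congr 1
          apply integral_congr_ae
          filter_upwards with ξ
          have hw12 : ((1:ℝ) + ‖ξ‖) ^ (-γ₁) * (1 + ‖ξ‖) ^ (-γ₂) = (1 + ‖ξ‖) ^ (-γ) := by
            rw [← Real.rpow_add (by positivity)]
            congr 1
            linarith
          rw [← hw12]
          ring
  -- Hölder / Cauchy-Schwarz
  have hpq : Real.HolderConjugate 2 2 := Real.HolderConjugate.two_two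
  have hmem : ∀ (φ : EuclideanSpace ℝ (Fin d) → ℂ) (c : ℝ), 0 < c → Continuous φ →
      Integrable φ volume → (∃ M, ∀ x, ‖φ x‖ ≤ M) →
      MemLp (fun ξ => ‖φ ξ‖ * (1 + ‖ξ‖) ^ (-c)) (ENNReal.ofReal 2) volume := by
    intro φ c hc hcont hint ⟨M, hM⟩
    have h2 : ENNReal.ofReal (2:ℝ) = 2 := by
      rw [ENNReal.ofReal_ofNat]
    rw [h2]
    have hφsq : Integrable (fun ξ => ‖φ ξ‖ ^ 2) volume := by
      simp_rw [sq]
      exact Integrable.bdd_mul hint.norm hcont.norm.aestronglyMeasurable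
        (ae_of_all _ fun x => by simpa using hM x)
    have hφ2 : MemLp φ 2 volume :=
      (memLp_two_iff_integrable_sq_norm hcont.aestronglyMeasurable).mpr hφsq
    refine hφ2.norm.of_le ?_ ?_
    · exact (hcont.norm.mul (hw_cont (-c))).aestronglyMeasurable
    · filter_upwards with ξ
      rw [Real.norm_eq_abs, abs_mul, _root_.abs_of_nonneg (norm_nonneg _),
        _root_.abs_of_nonneg (Real.rpow_nonneg (by positivity) _), norm_norm]
      nlinarith [hw_le_one c ξ hc, norm_nonneg (φ ξ),
        Real.rpow_nonneg (show (0:ℝ) ≤ 1 + ‖ξ‖ by positivity) (-c)]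
  have hnn1 : 0 ≤ᵐ[(volume : Measure (EuclideanSpace ℝ (Fin d)))]
      fun ξ => ‖FG ξ‖ * (1 + ‖ξ‖) ^ (-γ₁) :=
    Filter.Eventually.of_forall fun ξ => by positivity
  have hnn2 : 0 ≤ᵐ[(volume : Measure (EuclideanSpace ℝ (Fin d)))]
      fun ξ => ‖FH ξ‖ * (1 + ‖ξ‖) ^ (-γ₂) :=
    Filter.Eventually.of_forall fun ξ => by positivity
  have holder := integral_mul_le_Lp_mul_Lq_of_nonneg (μ := volume) hpq hnn1 hnn2
    (hmem FG γ₁ hγ₁ hFG_cont hFG_int hFG_bdd)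
    (hmem FH γ₂ hγ₂ hFH_cont hFH_int hFH_bdd)
  have hsq : ∀ (φ : EuclideanSpace ℝ (Fin d) → ℂ) (c : ℝ),
      (∫ ξ : EuclideanSpace ℝ (Fin d), (‖φ ξ‖ * (1 + ‖ξ‖) ^ (-c)) ^ (2:ℝ)) ^ ((1:ℝ)/2)
        = Real.sqrt (∫ ξ : EuclideanSpace ℝ (Fin d), ‖φ ξ‖ ^ 2 * (1 + ‖ξ‖) ^ ((-2) * c)) := by
    intro φ c
    rw [Real.sqrt_eq_rpow]
    congr 1
    apply integral_congr_ae
    filter_upwards with ξ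
    have h1 : ((‖φ ξ‖ * (1 + ‖ξ‖) ^ (-c)) : ℝ) ^ (2:ℝ)
        = (‖φ ξ‖ * (1 + ‖ξ‖) ^ (-c)) ^ (2:ℕ) := by
      rw [← Real.rpow_natCast _ 2]
      norm_num
    rw [h1, mul_pow]
    congr 1
    rw [← Real.rpow_natCast ((1 + ‖ξ‖) ^ (-c)) 2, ← Real.rpow_mul (by positivity)]
    congr 1
    push_cast
    ring
  -- ftR rewriting
  have hftR0 : ftR (fun x => f (⟨0, by omega⟩ : Fin k) x) = FG := by
    have hc : (fun x => (((f (⟨0, by omega⟩ : Fin k)) x : ℝ) : ℂ)) = ⇑(toC g) := by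
      funext x
      exact (toC_apply g x).symm
    rw [ftR_eq, hc, hFG]
  have hftR1 : ftR (fun x => f (⟨1, by omega⟩ : Fin k) x) = FH := by
    have hc : (fun x => (((f (⟨1, by omega⟩ : Fin k)) x : ℝ) : ℂ)) = ⇑(toC h) := by
      funext x
      exact (toC_apply h x).symm
    rw [ftR_eq, hc, hFH]
  rw [hftR0, hftR1]
  -- assemble
  have key2 : ∫ u, W' u ∂μ ≤
      C * (Real.sqrt (∫ ξ : EuclideanSpace ℝ (Fin d), ‖FG ξ‖ ^ 2 * (1 + ‖ξ‖) ^ ((-2) * γ₁))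
        * Real.sqrt (∫ ξ : EuclideanSpace ℝ (Fin d), ‖FH ξ‖ ^ 2 * (1 + ‖ξ‖) ^ ((-2) * γ₂))) := by
    rw [swap2]
    refine le_trans re_le ?_
    refine mul_le_mul_of_nonneg_left ?_ hC.le
    calc ∫ ξ, (‖FG ξ‖ * (1 + ‖ξ‖) ^ (-γ₁)) * (‖FH ξ‖ * (1 + ‖ξ‖) ^ (-γ₂))
        ≤ (∫ ξ : EuclideanSpace ℝ (Fin d), (‖FG ξ‖ * (1 + ‖ξ‖) ^ (-γ₁)) ^ (2:ℝ)) ^ ((1:ℝ)/2)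
          * (∫ ξ : EuclideanSpace ℝ (Fin d), (‖FH ξ‖ * (1 + ‖ξ‖) ^ (-γ₂)) ^ (2:ℝ)) ^ ((1:ℝ)/2) :=
          holder
      _ = _ := by rw [hsq FG γ₁, hsq FH γ₂]
  calc ∫ x, |∫ u, ∏ j, f j (x - u j) ∂μ| = ∫ x, |T x| := rfl
    _ ≤ B * ∫ u, W' u ∂μ := step1
    _ ≤ B * (C * (Real.sqrt (∫ ξ : EuclideanSpace ℝ (Fin d), ‖FG ξ‖ ^ 2 * (1 + ‖ξ‖) ^ ((-2) * γ₁))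
          * Real.sqrt (∫ ξ : EuclideanSpace ℝ (Fin d), ‖FH ξ‖ ^ 2 * (1 + ‖ξ‖) ^ ((-2) * γ₂)))) :=
        mul_le_mul_of_nonneg_left key2 hB_nn
    _ = C * B * Real.sqrt (∫ ξ : EuclideanSpace ℝ (Fin d), ‖FG ξ‖ ^ 2 * (1 + ‖ξ‖) ^ ((-2) * γ₁))
          * Real.sqrt (∫ ξ : EuclideanSpace ℝ (Fin d), ‖FH ξ‖ ^ 2 * (1 + ‖ξ‖) ^ ((-2) * γ₂)) := by
        ring

end Main

/-- Bound for translation invariant multilinear generalized Radon transforms: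
if the Fourier transform of the finite nonnegative measure `μ` on `(ℝ^d)^k` decays as
`|μ̂(-ξ,ξ,0,…,0)| ≤ C(1+|ξ|)^{-γ}`, then for `γ₁ + γ₂ = γ` and nonnegative Schwartz
functions `f₁,…,f_k`, the multilinear convolution `T_μ` obeys
`‖T_μ(f₁,…,f_k)‖_{L¹} ≲ (∏_{j≥3}‖f_j‖_∞) ‖f₁‖_{L²_{-γ₁}} ‖f₂‖_{L²_{-γ₂}}`. -/
theorem stmt0 {d k : ℕ} (hd : 1 ≤ d) (hk : 2 ≤ k)
    (μ : Measure (Fin k → EuclideanSpace ℝ (Fin d))) [IsFiniteMeasure μ]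
    (γ C : ℝ) (hγ : 0 < γ) (hC : 0 < C)
    (hdecay : ∀ ξ : EuclideanSpace ℝ (Fin d),
      ‖∫ u, negExp (∑ j, (inner ℝ (u j)
          (if (j : ℕ) = 0 then -ξ else if (j : ℕ) = 1 then ξ else 0) : ℝ)) ∂μ‖
        ≤ C * (1 + ‖ξ‖) ^ (-γ))
    (γ₁ γ₂ : ℝ) (hγ₁ : 0 < γ₁) (hγ₂ : 0 < γ₂) (hsum : γ₁ + γ₂ = γ) :
    ∃ C' : ℝ, 0 < C' ∧
      ∀ f : Fin k → SchwartzMap (EuclideanSpace ℝ (Fin d)) ℝ,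
        (∀ j x, 0 ≤ f j x) →
        ∫ x, |∫ u, ∏ j, f j (x - u j) ∂μ| ≤
          C' * (∏ j ∈ Finset.univ.filter (fun j : Fin k => 2 ≤ (j : ℕ)), ⨆ x, f j x) *
            Real.sqrt (∫ ξ : EuclideanSpace ℝ (Fin d),
              ‖ftR (fun x => f ⟨0, by omega⟩ x) ξ‖ ^ 2 * (1 + ‖ξ‖) ^ ((-2) * γ₁)) *
            Real.sqrt (∫ ξ : EuclideanSpace ℝ (Fin d),
              ‖ftR (fun x => f ⟨1, by omega⟩ x) ξ‖ ^ 2 * (1 + ‖ξ‖) ^ ((-2) * γ₂)) := by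
  exact stmt0' hd hk μ γ C hγ hC hdecay γ₁ γ₂ hγ₁ hγ₂ hsum
end

section
/- Let P ⊂ [0,1]^d be a set of n points, 0 < s < d, and μ_P^s the measure dμ_P^s(x) = n^{-1} n^{d/s} Σ_{p∈P} χ_{B(p, n^{-1/s})}(x) dx. Then the finiteness of the energy I_s(μ_P^s) = ∬ |x-y|^{-s} dμ_P^s(x) dμ_P^s(y) (uniformly in n) is equivalent, up to constants, to the discrete condition n^{-2} Σ_{p ≠ p' ∈ P} |p - p'|^{-s} ≲ 1, provided the points of P are n^{-1/s}-separated. -/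
open MeasureTheory Classical
open scoped BigOperators ENNReal

section stmt11aux

open Metric


lemma rdid {r : ℝ} (hr : 0 < r) (d : ℕ) : r ^ d * r ^ d = r ^ (2 * (d:ℝ)) := by
  rw [← Real.rpow_natCast r d, ← Real.rpow_add hr]
  congr 1; ring

lemma scaleS1 {s : ℝ} (hs0 : 0 < s) (d : ℕ) {n : ℕ} (hn : 1 ≤ n) :
    ((n:ℝ)⁻¹ * (n:ℝ) ^ ((d:ℝ)/s)) ^ 2 *
      ((n:ℝ) * ((n:ℝ) ^ (-1/s)) ^ (2 * (d:ℝ) - s)) = 1 := by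
  have hnp : (0:ℝ) < n := by exact_mod_cast hn
  have h1 : (0:ℝ) < (n:ℝ)⁻¹ * (n:ℝ) ^ ((d:ℝ)/s) := by positivity
  have h2 : (0:ℝ) < (n:ℝ) ^ (-1/s) := Real.rpow_pos_of_pos hnp _
  have hL : 0 < ((n:ℝ)⁻¹ * (n:ℝ) ^ ((d:ℝ)/s)) ^ 2 *
      ((n:ℝ) * ((n:ℝ) ^ (-1/s)) ^ (2 * (d:ℝ) - s)) := by positivity
  have hlog : Real.log (((n:ℝ)⁻¹ * (n:ℝ) ^ ((d:ℝ)/s)) ^ 2 *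
      ((n:ℝ) * ((n:ℝ) ^ (-1/s)) ^ (2 * (d:ℝ) - s))) = 0 := by
    rw [Real.log_mul (by positivity) (by positivity), Real.log_pow,
      Real.log_mul (by positivity) (by positivity), Real.log_inv,
      Real.log_mul (by positivity) (by positivity)]
    simp only [Real.log_rpow hnp, Real.log_rpow h2]
    have hs := hs0.ne'
    field_simp
    ring
  calc ((n:ℝ)⁻¹ * (n:ℝ) ^ ((d:ℝ)/s)) ^ 2 * ((n:ℝ) * ((n:ℝ) ^ (-1/s)) ^ (2 * (d:ℝ) - s))
      = Real.exp (Real.log (((n:ℝ)⁻¹ * (n:ℝ) ^ ((d:ℝ)/s)) ^ 2 *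
        ((n:ℝ) * ((n:ℝ) ^ (-1/s)) ^ (2 * (d:ℝ) - s)))) := (Real.exp_log hL).symm
    _ = Real.exp 0 := by rw [hlog]
    _ = 1 := Real.exp_zero

lemma scaleS2 {s : ℝ} (hs0 : 0 < s) (d : ℕ) {n : ℕ} (hn : 1 ≤ n) :
    ((n:ℝ)⁻¹ * (n:ℝ) ^ ((d:ℝ)/s)) ^ 2 * ((n:ℝ) ^ (-1/s)) ^ (2 * (d:ℝ)) = ((n:ℝ)⁻¹) ^ 2 := by
  have hnp : (0:ℝ) < n := by exact_mod_cast hn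
  have h2 : (0:ℝ) < (n:ℝ) ^ (-1/s) := Real.rpow_pos_of_pos hnp _
  have hL : 0 < ((n:ℝ)⁻¹ * (n:ℝ) ^ ((d:ℝ)/s)) ^ 2 * ((n:ℝ) ^ (-1/s)) ^ (2 * (d:ℝ)) := by
    positivity
  have hR : (0:ℝ) < ((n:ℝ)⁻¹) ^ 2 := by positivity
  rw [← Real.exp_log hL, ← Real.exp_log hR]
  congr 1
  rw [Real.log_mul (by positivity) (by positivity), Real.log_pow, Real.log_pow,
    Real.log_mul (by positivity) (by positivity), Real.log_inv]
  simp only [Real.log_rpow hnp, Real.log_rpow h2, Real.log_inv]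
  have hs := hs0.ne'
  field_simp
  ring

lemma far_real {s : ℝ} {r D : ℝ} (hr : 0 < r) (hD : 0 < D) (d : ℕ) :
    (D / 2) ^ (-s) * (r ^ d * r ^ d) = (2:ℝ) ^ s * (r ^ (2 * (d:ℝ)) * D ^ (-s)) := by
  rw [rdid hr d]
  have hD2 : (0:ℝ) < D / 2 := by positivity
  have hL : 0 < (D / 2) ^ (-s) * r ^ (2 * (d:ℝ)) := by positivity
  have hR : 0 < (2:ℝ) ^ s * (r ^ (2 * (d:ℝ)) * D ^ (-s)) := by positivity
  rw [← Real.exp_log hL, ← Real.exp_log hR]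
  congr 1
  rw [Real.log_mul (by positivity) (by positivity),
    Real.log_mul (by positivity) (by positivity),
    Real.log_mul (by positivity) (by positivity)]
  simp only [Real.log_rpow hr, Real.log_rpow hD, Real.log_rpow two_pos, Real.log_rpow hD2,
    Real.log_div hD.ne' (two_ne_zero)]
  ring

lemma near_real {s : ℝ} (hs0 : 0 < s) {r D : ℝ} (hr : 0 < r) (hD : 0 < D)
    (hle : D ≤ 4 * r) (d : ℕ) :
    r ^ (2 * (d:ℝ) - s) ≤ (4:ℝ) ^ s * (r ^ (2 * (d:ℝ)) * D ^ (-s)) := by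
  have h1 : (4 * r) ^ (-s) ≤ D ^ (-s) :=
    Real.rpow_le_rpow_of_nonpos hD hle (neg_nonpos.mpr hs0.le)
  have h2 : (4 * r) ^ (-s) = (4:ℝ) ^ (-s) * r ^ (-s) :=
    Real.mul_rpow (by norm_num) hr.le
  have h3 : r ^ (2 * (d:ℝ) - s) = r ^ (2 * (d:ℝ)) * r ^ (-s) := by
    rw [sub_eq_add_neg, Real.rpow_add hr]
  have h4 : (4:ℝ) ^ s * (4:ℝ) ^ (-s) = 1 := by
    rw [← Real.rpow_add (by norm_num : (0:ℝ) < 4)]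
    simp
  have h5 : r ^ (-s) ≤ (4:ℝ) ^ s * D ^ (-s) := by
    have h6 : (4:ℝ) ^ s * ((4:ℝ) ^ (-s) * r ^ (-s)) ≤ (4:ℝ) ^ s * D ^ (-s) :=
      mul_le_mul_of_nonneg_left (h2 ▸ h1) (Real.rpow_nonneg (by norm_num) s)
    calc r ^ (-s) = (4:ℝ) ^ s * (4:ℝ) ^ (-s) * r ^ (-s) := by rw [h4]; ring
    _ = (4:ℝ) ^ s * ((4:ℝ) ^ (-s) * r ^ (-s)) := by ring
    _ ≤ (4:ℝ) ^ s * D ^ (-s) := h6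
  calc r ^ (2 * (d:ℝ) - s) = r ^ (2 * (d:ℝ)) * r ^ (-s) := h3
  _ ≤ r ^ (2 * (d:ℝ)) * ((4:ℝ) ^ s * D ^ (-s)) :=
      mul_le_mul_of_nonneg_left h5 (Real.rpow_nonneg hr.le _)
  _ = (4:ℝ) ^ s * (r ^ (2 * (d:ℝ)) * D ^ (-s)) := by ring

lemma lower_real {s : ℝ} (hs0 : 0 < s) {r D : ℝ} (hr : 0 < r) (hD : 0 < D)
    (hle : r ≤ D) :
    (3:ℝ) ^ (-s) * D ^ (-s) ≤ (2 * r + D) ^ (-s) := by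
  have h1 : (3 * D) ^ (-s) ≤ (2 * r + D) ^ (-s) :=
    Real.rpow_le_rpow_of_nonpos (by positivity) (by linarith) (neg_nonpos.mpr hs0.le)
  calc (3:ℝ) ^ (-s) * D ^ (-s) = (3 * D) ^ (-s) :=
    (Real.mul_rpow (by norm_num) hD.le).symm
  _ ≤ (2 * r + D) ^ (-s) := h1

lemma shell_real {r : ℝ} (hr : 0 < r) (s : ℝ) (d k : ℕ) :
    (r / 2 ^ (k + 1)) ^ (-s) * (r / 2 ^ k) ^ d =
      (2:ℝ) ^ s * r ^ ((d : ℝ) - s) * ((2:ℝ) ^ (-((d:ℝ) - s))) ^ k := by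
  have h1 : (0:ℝ) < r / 2 ^ (k+1) := by positivity
  have hq : (0:ℝ) < (2:ℝ) ^ (-((d:ℝ) - s)) := Real.rpow_pos_of_pos two_pos _
  have hL : 0 < (r / 2 ^ (k + 1)) ^ (-s) * (r / 2 ^ k) ^ d := by positivity
  have hR : 0 < (2:ℝ) ^ s * r ^ ((d : ℝ) - s) * ((2:ℝ) ^ (-((d:ℝ) - s))) ^ k := by positivity
  rw [← Real.exp_log hL, ← Real.exp_log hR]
  congr 1
  rw [Real.log_mul (by positivity) (by positivity),
    Real.log_mul (by positivity) (by positivity),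
    Real.log_mul (by positivity) (by positivity),
    Real.log_rpow h1, Real.log_pow, Real.log_div hr.ne' (by positivity),
    Real.log_div hr.ne' (by positivity), Real.log_pow, Real.log_pow,
    Real.log_rpow two_pos, Real.log_rpow hr, Real.log_pow, Real.log_rpow two_pos]
  push_cast
  ring


variable {d : ℕ}
local notation "E" => EuclideanSpace ℝ (Fin d)

lemma centered_bound (hd : 1 ≤ d) {s : ℝ} (hs0 : 0 < s) (hsd : s < d) :
    ∃ C : ℝ≥0∞, C ≠ ∞ ∧ ∀ (x : E) (r : ℝ), 0 < r →
      ∫⁻ y in closedBall x r, ENNReal.ofReal (dist x y ^ (-s)) ≤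
        C * ENNReal.ofReal (r ^ ((d : ℝ) - s)) := by
  set c₀ : ℝ≥0∞ := volume (ball (0 : E) 1) with hc₀
  have hc₀top : c₀ < ∞ := measure_ball_lt_top
  set q : ℝ := (2 : ℝ) ^ (-((d : ℝ) - s)) with hqdef
  have hq0 : 0 < q := Real.rpow_pos_of_pos two_pos _
  have hq1 : q < 1 := by
    rw [hqdef]
    apply Real.rpow_lt_one_of_one_lt_of_neg one_lt_two
    linarith
  refine ⟨ENNReal.ofReal ((2:ℝ) ^ s) * c₀ * (1 - ENNReal.ofReal q)⁻¹, ?_, ?_⟩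
  · exact ENNReal.mul_ne_top (ENNReal.mul_ne_top ENNReal.ofReal_ne_top hc₀top.ne)
      (ENNReal.inv_ne_top.mpr (tsub_pos_of_lt (ENNReal.ofReal_lt_one.mpr hq1)).ne')
  intro x r hr
  have cover : closedBall x r ⊆ {x} ∪ ⋃ k : ℕ,
      (closedBall x (r / 2 ^ k) \ closedBall x (r / 2 ^ (k + 1))) := by
    intro y hy
    rcases eq_or_ne y x with h | h
    · exact Or.inl (by simp [h])
    · right
      have ht : 0 < dist y x := dist_pos.mpr h
      have hyr : dist y x ≤ r := mem_closedBall.mp hy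
      have hex : ∃ k : ℕ, r / 2 ^ (k + 1) < dist y x := by
        obtain ⟨m, hm⟩ := pow_unbounded_of_one_lt (r / dist y x) one_lt_two
        refine ⟨m, ?_⟩
        rw [div_lt_iff₀ (by positivity)]
        have h2m : (2:ℝ) ^ m ≤ 2 ^ (m+1) := by
          apply pow_le_pow_right₀ one_le_two; omega
        rw [div_lt_iff₀ ht] at hm
        nlinarith [ht, hm]
      set k₀ := Nat.find hex with hk₀def
      have h1 : r / 2 ^ (k₀ + 1) < dist y x := Nat.find_spec hex
      have h2 : dist y x ≤ r / 2 ^ k₀ := by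
        rcases Nat.eq_zero_or_pos k₀ with h0 | hpos
        · rw [h0]; simpa using hyr
        · obtain ⟨m, hm⟩ := Nat.exists_eq_succ_of_ne_zero hpos.ne'
          have hmin := Nat.find_min hex (m := m) (by omega)
          push_neg at hmin
          rw [hm]
          simpa using hmin
      exact Set.mem_iUnion.mpr ⟨k₀, by simp [mem_closedBall, h2, h1.not_ge]⟩
  have hsing : ∫⁻ y in ({x} : Set E), ENNReal.ofReal (dist x y ^ (-s)) = 0 := by
    rw [lintegral_singleton]
    simp [Real.zero_rpow (neg_ne_zero.mpr hs0.ne')]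
  have hterm : ∀ k : ℕ,
      ∫⁻ y in (closedBall x (r / 2 ^ k) \ closedBall x (r / 2 ^ (k + 1))),
        ENNReal.ofReal (dist x y ^ (-s)) ≤
      (ENNReal.ofReal ((2:ℝ) ^ s * r ^ ((d:ℝ) - s)) * c₀) * ENNReal.ofReal q ^ k := by
    intro k
    have hrk : (0:ℝ) < r / 2 ^ (k+1) := by positivity
    calc ∫⁻ y in (closedBall x (r / 2 ^ k) \ closedBall x (r / 2 ^ (k + 1))),
          ENNReal.ofReal (dist x y ^ (-s))
        ≤ ∫⁻ _ in (closedBall x (r / 2 ^ k) \ closedBall x (r / 2 ^ (k + 1))),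
          ENNReal.ofReal ((r / 2 ^ (k+1)) ^ (-s)) := by
          apply setLIntegral_mono measurable_const
          intro y hy
          apply ENNReal.ofReal_le_ofReal
          apply Real.rpow_le_rpow_of_nonpos hrk _ (neg_nonpos.mpr hs0.le)
          rw [dist_comm]
          exact le_of_lt (by simpa [mem_closedBall] using hy.2)
      _ = ENNReal.ofReal ((r / 2 ^ (k+1)) ^ (-s)) *
            volume (closedBall x (r / 2 ^ k) \ closedBall x (r / 2 ^ (k + 1))) :=
          setLIntegral_const _ _
      _ ≤ ENNReal.ofReal ((r / 2 ^ (k+1)) ^ (-s)) * volume (closedBall x (r / 2 ^ k)) := by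
          exact mul_le_mul_right (measure_mono Set.diff_subset) _
      _ = ENNReal.ofReal ((r / 2 ^ (k+1)) ^ (-s)) *
            (ENNReal.ofReal ((r / 2 ^ k) ^ d) * c₀) := by
          rw [hc₀]
          congr 1
          have := Measure.addHaar_closedBall (volume : Measure E) x (le_of_lt (by positivity : (0:ℝ) < r / 2 ^ k))
          rwa [finrank_euclideanSpace_fin] at this
      _ = (ENNReal.ofReal ((2:ℝ) ^ s * r ^ ((d:ℝ) - s)) * c₀) * ENNReal.ofReal q ^ k := by
          rw [← mul_assoc, ← ENNReal.ofReal_mul (by positivity), shell_real hr s d k,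
            ENNReal.ofReal_mul (by positivity), ← ENNReal.ofReal_pow hq0.le]
          ring
  calc ∫⁻ y in closedBall x r, ENNReal.ofReal (dist x y ^ (-s))
      ≤ ∫⁻ y in ({x} ∪ ⋃ k : ℕ, (closedBall x (r / 2 ^ k) \ closedBall x (r / 2 ^ (k + 1)))),
        ENNReal.ofReal (dist x y ^ (-s)) := lintegral_mono_set cover
    _ ≤ (∫⁻ y in ({x} : Set E), ENNReal.ofReal (dist x y ^ (-s))) +
        ∫⁻ y in (⋃ k : ℕ, (closedBall x (r / 2 ^ k) \ closedBall x (r / 2 ^ (k + 1)))),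
        ENNReal.ofReal (dist x y ^ (-s)) := lintegral_union_le _ _ _
    _ ≤ 0 + ∑' k : ℕ, ∫⁻ y in (closedBall x (r / 2 ^ k) \ closedBall x (r / 2 ^ (k + 1))),
        ENNReal.ofReal (dist x y ^ (-s)) := by
        rw [hsing]
        gcongr
        exact lintegral_iUnion_le _ _
    _ ≤ ∑' k : ℕ, (ENNReal.ofReal ((2:ℝ) ^ s * r ^ ((d:ℝ) - s)) * c₀) * ENNReal.ofReal q ^ k := by
        rw [zero_add]
        exact ENNReal.tsum_le_tsum hterm
    _ = (ENNReal.ofReal ((2:ℝ) ^ s * r ^ ((d:ℝ) - s)) * c₀) * (1 - ENNReal.ofReal q)⁻¹ := by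
        rw [ENNReal.tsum_mul_left, ENNReal.tsum_geometric]
    _ = ENNReal.ofReal ((2:ℝ) ^ s) * c₀ * (1 - ENNReal.ofReal q)⁻¹ *
          ENNReal.ofReal (r ^ ((d:ℝ) - s)) := by
        rw [ENNReal.ofReal_mul (by positivity)]
        ring

lemma off_real {r : ℝ} (hr : 0 < r) (s : ℝ) (d : ℕ) :
    (2 * r) ^ (-s) * r ^ d = (2:ℝ) ^ (-s) * r ^ ((d:ℝ) - s) := by
  have hL : 0 < (2 * r) ^ (-s) * r ^ d := by positivity
  have hR : 0 < (2:ℝ) ^ (-s) * r ^ ((d:ℝ) - s) := by positivity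
  rw [← Real.exp_log hL, ← Real.exp_log hR]
  congr 1
  rw [Real.log_mul (by positivity) (by positivity),
    Real.log_mul (by positivity) (by positivity),
    Real.log_rpow (by positivity), Real.log_pow, Real.log_mul (by norm_num) hr.ne',
    Real.log_rpow two_pos, Real.log_rpow hr]
  push_cast; ring



lemma pair_real {r : ℝ} (hr : 0 < r) (s : ℝ) (d : ℕ) :
    r ^ ((d:ℝ) - s) * r ^ d = r ^ (2 * (d:ℝ) - s) := by
  have hL : 0 < r ^ ((d:ℝ) - s) * r ^ d := by positivity
  have hR : 0 < r ^ (2 * (d:ℝ) - s) := by positivity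
  rw [← Real.exp_log hL, ← Real.exp_log hR]
  congr 1
  rw [Real.log_mul (by positivity) (by positivity), Real.log_rpow hr, Real.log_pow,
    Real.log_rpow hr]
  push_cast; ring

lemma offset_bound (hd : 1 ≤ d) {s : ℝ} (hs0 : 0 < s) (hsd : s < d)
    {C1 : ℝ≥0∞} (hC1 : C1 ≠ ∞)
    (h1 : ∀ (x : E) (r : ℝ), 0 < r →
      ∫⁻ y in closedBall x r, ENNReal.ofReal (dist x y ^ (-s)) ≤
        C1 * ENNReal.ofReal (r ^ ((d : ℝ) - s))) :
    ∃ C : ℝ≥0∞, C ≠ ∞ ∧ ∀ (x c : E) (r : ℝ), 0 < r →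
      ∫⁻ y in closedBall c r, ENNReal.ofReal (dist x y ^ (-s)) ≤
        C * ENNReal.ofReal (r ^ ((d : ℝ) - s)) := by
  set c₀ : ℝ≥0∞ := volume (ball (0 : E) 1) with hc₀
  have hc₀top : c₀ < ∞ := measure_ball_lt_top
  refine ⟨C1 * ENNReal.ofReal ((2:ℝ) ^ ((d:ℝ) - s)) + ENNReal.ofReal ((2:ℝ) ^ (-s)) * c₀,
    ENNReal.add_ne_top.mpr ⟨ENNReal.mul_ne_top hC1 ENNReal.ofReal_ne_top,
      ENNReal.mul_ne_top ENNReal.ofReal_ne_top hc₀top.ne⟩, ?_⟩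
  intro x c r hr
  have hsub : closedBall c r ⊆ closedBall x (2 * r) ∪ (closedBall c r \ closedBall x (2 * r)) := by
    intro y hy
    by_cases h : y ∈ closedBall x (2 * r)
    · exact Or.inl h
    · exact Or.inr ⟨hy, h⟩
  calc ∫⁻ y in closedBall c r, ENNReal.ofReal (dist x y ^ (-s))
      ≤ ∫⁻ y in (closedBall x (2 * r) ∪ (closedBall c r \ closedBall x (2 * r))),
          ENNReal.ofReal (dist x y ^ (-s)) := lintegral_mono_set hsub
    _ ≤ (∫⁻ y in closedBall x (2 * r), ENNReal.ofReal (dist x y ^ (-s))) +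
          ∫⁻ y in (closedBall c r \ closedBall x (2 * r)),
            ENNReal.ofReal (dist x y ^ (-s)) := lintegral_union_le _ _ _
    _ ≤ C1 * ENNReal.ofReal ((2 * r) ^ ((d:ℝ) - s)) +
          ENNReal.ofReal ((2 * r) ^ (-s)) * volume (closedBall c r) := by
        gcongr
        · exact h1 x (2 * r) (by positivity)
        · calc ∫⁻ y in (closedBall c r \ closedBall x (2 * r)),
                ENNReal.ofReal (dist x y ^ (-s))
              ≤ ∫⁻ _ in (closedBall c r \ closedBall x (2 * r)),
                ENNReal.ofReal ((2 * r) ^ (-s)) := by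
                apply setLIntegral_mono measurable_const
                intro y hy
                apply ENNReal.ofReal_le_ofReal
                apply Real.rpow_le_rpow_of_nonpos (by positivity) _ (neg_nonpos.mpr hs0.le)
                have : ¬ dist y x ≤ 2 * r := fun hc => hy.2 (mem_closedBall.mpr hc)
                rw [dist_comm]
                linarith [not_le.mp this]
            _ = ENNReal.ofReal ((2 * r) ^ (-s)) *
                volume (closedBall c r \ closedBall x (2 * r)) := setLIntegral_const _ _
            _ ≤ ENNReal.ofReal ((2 * r) ^ (-s)) * volume (closedBall c r) :=
                mul_le_mul_right (measure_mono Set.diff_subset) _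
    _ = (C1 * ENNReal.ofReal ((2:ℝ) ^ ((d:ℝ) - s)) + ENNReal.ofReal ((2:ℝ) ^ (-s)) * c₀) *
          ENNReal.ofReal (r ^ ((d:ℝ) - s)) := by
        have hvol : volume (closedBall c r) = ENNReal.ofReal (r ^ d) * c₀ := by
          rw [hc₀]
          have := Measure.addHaar_closedBall (volume : Measure E) c hr.le
          rwa [finrank_euclideanSpace_fin] at this
        have e1 : C1 * ENNReal.ofReal ((2 * r) ^ ((d:ℝ) - s))
            = C1 * ENNReal.ofReal ((2:ℝ) ^ ((d:ℝ) - s)) * ENNReal.ofReal (r ^ ((d:ℝ) - s)) := by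
          rw [mul_assoc, ← ENNReal.ofReal_mul (by positivity),
            ← Real.mul_rpow (by norm_num) hr.le]
        have e2 : ENNReal.ofReal ((2 * r) ^ (-s)) * volume (closedBall c r)
            = ENNReal.ofReal ((2:ℝ) ^ (-s)) * c₀ * ENNReal.ofReal (r ^ ((d:ℝ) - s)) := by
          rw [hvol, ← mul_assoc, ← ENNReal.ofReal_mul (by positivity), off_real hr s d,
            ENNReal.ofReal_mul (by positivity)]
          ring
        rw [e1, e2, add_mul]


lemma pair_bound (hd : 1 ≤ d) {s : ℝ} (hs0 : 0 < s) (hsd : s < d) :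
    ∃ C : ℝ≥0∞, C ≠ ∞ ∧ ∀ (p q : E) (r : ℝ), 0 < r →
      (∫⁻ x in closedBall p r, ∫⁻ y in closedBall q r, ENNReal.ofReal (dist x y ^ (-s)))
        ≤ C * ENNReal.ofReal (r ^ (2 * (d:ℝ) - s)) := by
  obtain ⟨C1, hC1, h1⟩ := centered_bound hd hs0 hsd
  obtain ⟨C2, hC2, h2⟩ := offset_bound hd hs0 hsd hC1 h1
  set c₀ : ℝ≥0∞ := volume (ball (0 : E) 1) with hc₀
  have hc₀top : c₀ < ∞ := measure_ball_lt_top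
  refine ⟨C2 * c₀, ENNReal.mul_ne_top hC2 hc₀top.ne, ?_⟩
  intro p q r hr
  have hvol : volume (closedBall p r) = ENNReal.ofReal (r ^ d) * c₀ := by
    rw [hc₀]
    have := Measure.addHaar_closedBall (volume : Measure E) p hr.le
    rwa [finrank_euclideanSpace_fin] at this
  calc (∫⁻ x in closedBall p r, ∫⁻ y in closedBall q r, ENNReal.ofReal (dist x y ^ (-s)))
      ≤ ∫⁻ _ in closedBall p r, C2 * ENNReal.ofReal (r ^ ((d:ℝ) - s)) := by
        apply setLIntegral_mono measurable_const
        intro x _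
        exact h2 x q r hr
    _ = C2 * ENNReal.ofReal (r ^ ((d:ℝ) - s)) * volume (closedBall p r) :=
        setLIntegral_const _ _
    _ = C2 * c₀ * ENNReal.ofReal (r ^ (2 * (d:ℝ) - s)) := by
        rw [hvol, ← pair_real hr s d, ENNReal.ofReal_mul (by positivity)]
        ring

lemma pair_far {s : ℝ} (hs0 : 0 < s) {p q : E} {r : ℝ} (hr : 0 < r)
    (hfar : 4 * r ≤ dist p q) :
    (∫⁻ x in closedBall p r, ∫⁻ y in closedBall q r, ENNReal.ofReal (dist x y ^ (-s)))
      ≤ ENNReal.ofReal ((dist p q / 2) ^ (-s)) *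
        (volume (closedBall p r) * volume (closedBall q r)) := by
  have hD : 0 < dist p q := lt_of_lt_of_le (by positivity) hfar
  calc (∫⁻ x in closedBall p r, ∫⁻ y in closedBall q r, ENNReal.ofReal (dist x y ^ (-s)))
      ≤ ∫⁻ _ in closedBall p r,
          ENNReal.ofReal ((dist p q / 2) ^ (-s)) * volume (closedBall q r) := by
        apply setLIntegral_mono measurable_const
        intro x hx
        calc (∫⁻ y in closedBall q r, ENNReal.ofReal (dist x y ^ (-s)))
            ≤ ∫⁻ _ in closedBall q r, ENNReal.ofReal ((dist p q / 2) ^ (-s)) := by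
              apply setLIntegral_mono measurable_const
              intro y hy
              apply ENNReal.ofReal_le_ofReal
              apply Real.rpow_le_rpow_of_nonpos (by positivity) _ (neg_nonpos.mpr hs0.le)
              have h4 := dist_triangle4 p x y q
              have hxp : dist p x ≤ r := mem_closedBall'.mp hx
              have hyq : dist y q ≤ r := mem_closedBall.mp hy
              linarith
          _ = ENNReal.ofReal ((dist p q / 2) ^ (-s)) * volume (closedBall q r) :=
              setLIntegral_const _ _
    _ = ENNReal.ofReal ((dist p q / 2) ^ (-s)) *
        (volume (closedBall p r) * volume (closedBall q r)) := by
        rw [setLIntegral_const]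
        ring


lemma pair_lower (hd : 1 ≤ d) {s : ℝ} (hs0 : 0 < s) {p q : E} {r : ℝ} (hr : 0 < r) :
    ENNReal.ofReal ((2 * r + dist p q) ^ (-s)) *
        (volume (closedBall p r) * volume (closedBall q r))
      ≤ ∫⁻ x in closedBall p r, ∫⁻ y in closedBall q r, ENNReal.ofReal (dist x y ^ (-s)) := by
  haveI : Nonempty (Fin d) := ⟨⟨0, hd⟩⟩
  haveI : Nontrivial (EuclideanSpace ℝ (Fin d)) := inferInstance
  have hT : 0 < 2 * r + dist p q := by positivity
  have inner : ∀ x ∈ closedBall p r,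
      ENNReal.ofReal ((2 * r + dist p q) ^ (-s)) * volume (closedBall q r)
        ≤ ∫⁻ y in closedBall q r, ENNReal.ofReal (dist x y ^ (-s)) := by
    intro x hx
    have h0 : volume (closedBall q r \ {x}) = volume (closedBall q r) :=
      measure_diff_null (measure_singleton x)
    calc ENNReal.ofReal ((2 * r + dist p q) ^ (-s)) * volume (closedBall q r)
        = ENNReal.ofReal ((2 * r + dist p q) ^ (-s)) * volume (closedBall q r \ {x}) := by
          rw [h0]
      _ = ∫⁻ _ in closedBall q r \ {x}, ENNReal.ofReal ((2 * r + dist p q) ^ (-s)) :=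
          (setLIntegral_const _ _).symm
      _ ≤ ∫⁻ y in closedBall q r \ {x}, ENNReal.ofReal (dist x y ^ (-s)) := by
          apply setLIntegral_mono' (measurableSet_closedBall.diff (measurableSet_singleton x))
          intro y hy
          apply ENNReal.ofReal_le_ofReal
          have hxy : 0 < dist x y := dist_pos.mpr fun h => hy.2 (by simp [h.symm])
          apply Real.rpow_le_rpow_of_nonpos hxy _ (neg_nonpos.mpr hs0.le)
          have h4 := dist_triangle4 x p q y
          have hxp : dist x p ≤ r := mem_closedBall.mp hx
          have hyq : dist q y ≤ r := mem_closedBall'.mp hy.1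
          linarith
      _ ≤ ∫⁻ y in closedBall q r, ENNReal.ofReal (dist x y ^ (-s)) :=
          lintegral_mono_set Set.diff_subset
  calc ENNReal.ofReal ((2 * r + dist p q) ^ (-s)) *
        (volume (closedBall p r) * volume (closedBall q r))
      = (ENNReal.ofReal ((2 * r + dist p q) ^ (-s)) * volume (closedBall q r)) *
          volume (closedBall p r) := by ring
    _ = ∫⁻ _ in closedBall p r,
          ENNReal.ofReal ((2 * r + dist p q) ^ (-s)) * volume (closedBall q r) :=
        (setLIntegral_const _ _).symm
    _ ≤ ∫⁻ x in closedBall p r, ∫⁻ y in closedBall q r, ENNReal.ofReal (dist x y ^ (-s)) :=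
        setLIntegral_mono' measurableSet_closedBall inner

lemma En_expand (s : ℝ) (P : Finset E) (r a : ℝ) (ha : 0 ≤ a) :
    (∫⁻ x, ∫⁻ y, ENNReal.ofReal (dist x y ^ (-s))
        ∂(volume.withDensity fun z => ENNReal.ofReal (a * ∑ p ∈ P, if dist z p ≤ r then (1:ℝ) else 0))
      ∂(volume.withDensity fun z => ENNReal.ofReal (a * ∑ p ∈ P, if dist z p ≤ r then (1:ℝ) else 0)))
    = ENNReal.ofReal a ^ 2 * ∑ p ∈ P, ∑ q ∈ P,
        ∫⁻ x in closedBall p r, ∫⁻ y in closedBall q r, ENNReal.ofReal (dist x y ^ (-s)) := by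
  set K : E → E → ℝ≥0∞ := fun x y => ENNReal.ofReal (dist x y ^ (-s)) with hK
  set f : E → ℝ≥0∞ :=
    (fun z => ENNReal.ofReal (a * ∑ p ∈ P, if dist z p ≤ r then (1:ℝ) else 0)) with hfdef
  set A : ℝ≥0∞ := ENNReal.ofReal a with hA
  set g : E → E → ℝ≥0∞ := fun p z => if dist z p ≤ r then (1:ℝ≥0∞) else 0 with hg
  have hgmeas : ∀ p : E, Measurable (g p) := by
    intro p
    apply Measurable.ite _ measurable_const measurable_const
    show MeasurableSet {z : E | dist z p ≤ r}
    exact measurableSet_closedBall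
  have hfmeas : Measurable f := by
    apply Measurable.ennreal_ofReal
    apply Measurable.const_mul
    apply Finset.measurable_sum
    intro p _
    apply Measurable.ite _ measurable_const measurable_const
    show MeasurableSet {z : E | dist z p ≤ r}
    exact measurableSet_closedBall
  have hflt : ∀ᵐ z ∂(volume : Measure E), f z < ∞ :=
    Filter.Eventually.of_forall fun z => ENNReal.ofReal_lt_top
  have hfeq : ∀ z, f z = A * ∑ p ∈ P, g p z := by
    intro z
    rw [hfdef]
    simp only []
    rw [ENNReal.ofReal_mul ha, ENNReal.ofReal_sum_of_nonneg (fun p _ => by positivity)]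
    congr 1
    refine Finset.sum_congr rfl fun p _ => ?_
    by_cases h : dist z p ≤ r <;> simp [hg, h]
  have hKmeas : Measurable (fun z : E × E => K z.1 z.2) := by
    apply Measurable.ennreal_ofReal
    fun_prop
  have hKx : ∀ x : E, Measurable (K x) := by
    intro x
    apply Measurable.ennreal_ofReal
    fun_prop
  have hind : ∀ (q : E) (F : E → ℝ≥0∞), (∫⁻ y, g q y * F y) = ∫⁻ y in closedBall q r, F y := by
    intro q F
    classical
    rw [← lintegral_indicator measurableSet_closedBall]
    congr 1; funext y
    rw [Set.indicator_apply]
    by_cases h : y ∈ closedBall q r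
    · simp [hg, mem_closedBall.mp h, h]
    · have h' : ¬ dist y q ≤ r := fun hc => h (mem_closedBall.mpr hc)
      simp [hg, h', h]
  set J : E → E → ℝ≥0∞ := fun q x => ∫⁻ y in closedBall q r, K x y with hJ
  have hJmeas : ∀ q : E, Measurable (J q) :=
    fun q => Measurable.lintegral_prod_right' hKmeas
  have hAne : A ≠ ∞ := ENNReal.ofReal_ne_top
  rw [lintegral_withDensity_eq_lintegral_mul_non_measurable volume hfmeas hflt]
  have inner_eq : ∀ x : E, (∫⁻ y, K x y ∂(volume.withDensity f)) = A * ∑ q ∈ P, J q x := by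
    intro x
    rw [lintegral_withDensity_eq_lintegral_mul_non_measurable volume hfmeas hflt]
    have hpt : ∀ y, (f * K x) y = ∑ q ∈ P, A * (g q y * K x y) := by
      intro y
      simp only [Pi.mul_apply, hfeq y, Finset.mul_sum, Finset.sum_mul, mul_assoc]
    rw [lintegral_congr hpt,
      lintegral_finset_sum (f := fun q y => A * (g q y * K x y)) _ (fun q _ => (((hgmeas q).mul (hKx x)).const_mul A))]
    have : ∀ q ∈ P, (∫⁻ y, A * (g q y * K x y)) = A * J q x := by
      intro q _
      rw [lintegral_const_mul' A _ hAne, hind q (K x)]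
    rw [Finset.sum_congr rfl this, ← Finset.mul_sum]
  have hout : ∀ x : E, (f * fun x' => ∫⁻ y, K x' y ∂(volume.withDensity f)) x
      = ∑ p ∈ P, ∑ q ∈ P, A * A * (g p x * J q x) := by
    intro x
    simp only [Pi.mul_apply, inner_eq x]
    rw [hfeq x]
    rw [show (A * ∑ p ∈ P, g p x) * (A * ∑ q ∈ P, J q x)
        = A * A * ((∑ p ∈ P, g p x) * (∑ q ∈ P, J q x)) by ring,
      Finset.sum_mul_sum, Finset.mul_sum]
    refine Finset.sum_congr rfl fun p _ => ?_
    rw [Finset.mul_sum]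
  rw [lintegral_congr hout,
    lintegral_finset_sum (f := fun p x => ∑ q ∈ P, A * A * (g p x * J q x)) _ (fun p _ => Finset.measurable_sum _
      (fun q _ => (((hgmeas p).mul (hJmeas q)).const_mul (A * A))))]
  have hpq : ∀ p ∈ P, (∫⁻ x, ∑ q ∈ P, A * A * (g p x * J q x))
      = ∑ q ∈ P, A * A * ∫⁻ x in closedBall p r, J q x := by
    intro p _
    rw [lintegral_finset_sum (f := fun q x => A * A * (g p x * J q x)) _ (fun q _ => (((hgmeas p).mul (hJmeas q)).const_mul (A * A)))]
    refine Finset.sum_congr rfl fun q _ => ?_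
    rw [lintegral_const_mul' (A * A) _ (ENNReal.mul_ne_top hAne hAne), hind p (J q)]
  rw [Finset.sum_congr rfl hpq]
  rw [Finset.mul_sum]
  refine Finset.sum_congr rfl fun p _ => ?_
  rw [Finset.mul_sum]
  refine Finset.sum_congr rfl fun q _ => ?_
  rw [sq]

end stmt11aux

/-- For an `n^{-1/s}`-separated set `P` of `n` points in `[0,1]^d`, the `s`-energy of the
thickened measure `μ_P^s` is finite (uniformly in `n`) if and only if, up to constants, the
discrete condition `n^{-2} ∑_{p≠p'} |p-p'|^{-s} ≲ 1` holds. -/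
theorem stmt11 {d : ℕ} (hd : 1 ≤ d) (s : ℝ) (hs0 : 0 < s) (hsd : s < d) :
    ∃ C : ℝ, 0 < C ∧
      ∀ n : ℕ, 1 ≤ n → ∀ P : Finset (EuclideanSpace ℝ (Fin d)),
        P.card = n →
        (∀ p ∈ P, ∀ i, p i ∈ Set.Icc (0 : ℝ) 1) →
        (∀ p ∈ P, ∀ q ∈ P, p ≠ q → (n : ℝ) ^ (-1 / s) ≤ dist p q) →
        (let μP : Measure (EuclideanSpace ℝ (Fin d)) :=
          volume.withDensity fun z => ENNReal.ofReal ((n : ℝ)⁻¹ * (n : ℝ) ^ ((d : ℝ) / s) *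
            ∑ p ∈ P, if dist z p ≤ (n : ℝ) ^ (-1 / s) then (1 : ℝ) else 0)
        let En : ℝ≥0∞ := ∫⁻ x, ∫⁻ y, ENNReal.ofReal (dist x y ^ (-s)) ∂μP ∂μP
        let D : ℝ := (n : ℝ)⁻¹ ^ 2 *
          ∑ p ∈ P, ∑ q ∈ P.erase p, dist p q ^ (-s)
        En ≤ ENNReal.ofReal (C * (D + 1)) ∧
          ENNReal.ofReal D ≤ ENNReal.ofReal C * (En + 1)) := by
  classical
  obtain ⟨Cp, hCp, hpair⟩ := pair_bound hd hs0 hsd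
  set c₀ : ℝ≥0∞ := volume (Metric.ball (0 : EuclideanSpace ℝ (Fin d)) 1) with hc₀def
  have hc₀top : c₀ < ∞ := measure_ball_lt_top
  have hc₀pos : 0 < c₀ := Metric.measure_ball_pos _ _ one_pos
  set Coff : ℝ≥0∞ := ENNReal.ofReal ((2:ℝ) ^ s) * c₀ ^ 2 + Cp * ENNReal.ofReal ((4:ℝ) ^ s)
    with hCoffdef
  have hCoffTop : Coff ≠ ∞ := by
    apply ENNReal.add_ne_top.mpr
    exact ⟨ENNReal.mul_ne_top ENNReal.ofReal_ne_top (ENNReal.pow_ne_top hc₀top.ne),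
      ENNReal.mul_ne_top hCp ENNReal.ofReal_ne_top⟩
  set klow : ℝ≥0∞ := ENNReal.ofReal ((3:ℝ) ^ (-s)) * c₀ ^ 2 with hklowdef
  have hklow0 : klow ≠ 0 := by
    apply mul_ne_zero
    · exact (ENNReal.ofReal_pos.mpr (Real.rpow_pos_of_pos three_pos _)).ne'
    · exact pow_ne_zero 2 hc₀pos.ne'
  have hklowTop : klow ≠ ∞ :=
    ENNReal.mul_ne_top ENNReal.ofReal_ne_top (ENNReal.pow_ne_top hc₀top.ne)
  set C : ℝ := max (Cp.toReal + Coff.toReal) (klow⁻¹).toReal + 1 with hCdef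
  have hC0 : 0 < C := by
    have h1 : 0 ≤ Cp.toReal + Coff.toReal := add_nonneg ENNReal.toReal_nonneg ENNReal.toReal_nonneg
    have h2 : Cp.toReal + Coff.toReal ≤ max (Cp.toReal + Coff.toReal) (klow⁻¹).toReal :=
      le_max_left _ _
    rw [hCdef]; linarith
  have hCmax1 : Cp.toReal + Coff.toReal ≤ C := by
    rw [hCdef]; have := le_max_left (Cp.toReal + Coff.toReal) (klow⁻¹).toReal; linarith
  have hCmax2 : (klow⁻¹).toReal ≤ C := by
    rw [hCdef]; have := le_max_right (Cp.toReal + Coff.toReal) (klow⁻¹).toReal; linarith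
  refine ⟨C, hC0, ?_⟩
  intro n hn P hcard hbox hsep
  intro μP En D
  have hnp : (0:ℝ) < n := by exact_mod_cast hn
  set r : ℝ := (n:ℝ) ^ (-1/s) with hrdef
  have hr : 0 < r := Real.rpow_pos_of_pos hnp _
  set a : ℝ := (n:ℝ)⁻¹ * (n:ℝ) ^ ((d:ℝ)/s) with hadef
  have ha : 0 ≤ a := by positivity
  set I : EuclideanSpace ℝ (Fin d) → EuclideanSpace ℝ (Fin d) → ℝ≥0∞ :=
    fun p q => ∫⁻ x in Metric.closedBall p r, ∫⁻ y in Metric.closedBall q r,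
      ENNReal.ofReal (dist x y ^ (-s)) with hIdef
  have hEn : En = ENNReal.ofReal a ^ 2 * ∑ p ∈ P, ∑ q ∈ P, I p q := En_expand s P r a ha
  set S : ℝ := ∑ p ∈ P, ∑ q ∈ P.erase p, dist p q ^ (-s) with hSdef
  have hS0 : 0 ≤ S := by
    apply Finset.sum_nonneg; intro p _
    apply Finset.sum_nonneg; intro q _
    exact Real.rpow_nonneg dist_nonneg _
  have hD : D = (n:ℝ)⁻¹ ^ 2 * S := rfl
  have hSenn : ∑ p ∈ P, ∑ q ∈ P.erase p, ENNReal.ofReal (dist p q ^ (-s))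
      = ENNReal.ofReal S := by
    rw [hSdef, ENNReal.ofReal_sum_of_nonneg (fun p _ => Finset.sum_nonneg
      (fun q _ => Real.rpow_nonneg dist_nonneg _))]
    exact Finset.sum_congr rfl fun p _ => (ENNReal.ofReal_sum_of_nonneg
      (fun q _ => Real.rpow_nonneg dist_nonneg _)).symm
  have hvol : ∀ p : EuclideanSpace ℝ (Fin d),
      volume (Metric.closedBall p r) = ENNReal.ofReal (r ^ d) * c₀ := by
    intro p
    rw [hc₀def]
    have := Measure.addHaar_closedBall (volume : Measure (EuclideanSpace ℝ (Fin d))) p hr.le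
    rwa [finrank_euclideanSpace_fin] at this
  -- key scalar identities
  have key1 : ENNReal.ofReal a ^ 2 * ((n:ℝ≥0∞) * ENNReal.ofReal (r ^ (2 * (d:ℝ) - s))) = 1 := by
    rw [← ENNReal.ofReal_natCast n, ← ENNReal.ofReal_pow ha,
      ← ENNReal.ofReal_mul (by positivity), ← ENNReal.ofReal_mul (by positivity),
      hadef, hrdef, scaleS1 hs0 d hn, ENNReal.ofReal_one]
  have key2 : ENNReal.ofReal a ^ 2 * ENNReal.ofReal (r ^ (2 * (d:ℝ)))
      = ENNReal.ofReal ((n:ℝ)⁻¹ ^ 2) := by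
    rw [← ENNReal.ofReal_pow ha, ← ENNReal.ofReal_mul (by positivity),
      hadef, hrdef, scaleS2 hs0 d hn]
  -- separation facts
  have hsep' : ∀ p ∈ P, ∀ q ∈ P.erase p, r ≤ dist p q ∧ 0 < dist p q := by
    intro p hp q hq
    obtain ⟨hqne, hqP⟩ := Finset.mem_erase.mp hq
    have h := hsep p hp q hqP (fun h => hqne (h.symm))
    exact ⟨h, lt_of_lt_of_le hr h⟩
  -- off-diagonal upper bound
  have hoffb : ∀ p ∈ P, ∀ q ∈ P.erase p, I p q ≤
      (Coff * ENNReal.ofReal (r ^ (2 * (d:ℝ)))) * ENNReal.ofReal (dist p q ^ (-s)) := by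
    intro p hp q hq
    obtain ⟨hrle, hDpos⟩ := hsep' p hp q hq
    by_cases hfar : 4 * r ≤ dist p q
    · calc I p q ≤ ENNReal.ofReal ((dist p q / 2) ^ (-s)) *
            (volume (Metric.closedBall p r) * volume (Metric.closedBall q r)) :=
            pair_far hs0 hr hfar
        _ = ENNReal.ofReal ((2:ℝ) ^ s) * c₀ ^ 2 *
            (ENNReal.ofReal (r ^ (2 * (d:ℝ))) * ENNReal.ofReal (dist p q ^ (-s))) := by
            rw [hvol p, hvol q]
            rw [show (ENNReal.ofReal (r ^ d) * c₀) * (ENNReal.ofReal (r ^ d) * c₀)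
              = ENNReal.ofReal (r ^ d * r ^ d) * c₀ ^ 2 by
                rw [ENNReal.ofReal_mul (by positivity)]; ring]
            rw [← mul_assoc, ← ENNReal.ofReal_mul (by positivity), far_real hr hDpos d,
              ENNReal.ofReal_mul (by positivity), ENNReal.ofReal_mul (by positivity)]
            ring
        _ ≤ (Coff * ENNReal.ofReal (r ^ (2 * (d:ℝ)))) * ENNReal.ofReal (dist p q ^ (-s)) := by
            rw [hCoffdef]
            calc ENNReal.ofReal ((2:ℝ) ^ s) * c₀ ^ 2 *
                (ENNReal.ofReal (r ^ (2 * (d:ℝ))) * ENNReal.ofReal (dist p q ^ (-s)))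
                ≤ (ENNReal.ofReal ((2:ℝ) ^ s) * c₀ ^ 2 + Cp * ENNReal.ofReal ((4:ℝ) ^ s)) *
                (ENNReal.ofReal (r ^ (2 * (d:ℝ))) * ENNReal.ofReal (dist p q ^ (-s))) :=
                mul_le_mul_left (self_le_add_right _ _) _
              _ = _ := by ring
    · have hnear : dist p q ≤ 4 * r := le_of_not_ge hfar
      calc I p q ≤ Cp * ENNReal.ofReal (r ^ (2 * (d:ℝ) - s)) := hpair p q r hr
        _ ≤ Cp * ENNReal.ofReal ((4:ℝ) ^ s * (r ^ (2 * (d:ℝ)) * dist p q ^ (-s))) :=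
            mul_le_mul_right (ENNReal.ofReal_le_ofReal
              (near_real hs0 hr hDpos hnear d)) _
        _ = Cp * ENNReal.ofReal ((4:ℝ) ^ s) *
            (ENNReal.ofReal (r ^ (2 * (d:ℝ))) * ENNReal.ofReal (dist p q ^ (-s))) := by
            rw [ENNReal.ofReal_mul (by positivity), ENNReal.ofReal_mul (by positivity)]
            ring
        _ ≤ (Coff * ENNReal.ofReal (r ^ (2 * (d:ℝ)))) * ENNReal.ofReal (dist p q ^ (-s)) := by
            rw [hCoffdef]
            calc Cp * ENNReal.ofReal ((4:ℝ) ^ s) *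
                (ENNReal.ofReal (r ^ (2 * (d:ℝ))) * ENNReal.ofReal (dist p q ^ (-s)))
                ≤ (ENNReal.ofReal ((2:ℝ) ^ s) * c₀ ^ 2 + Cp * ENNReal.ofReal ((4:ℝ) ^ s)) *
                (ENNReal.ofReal (r ^ (2 * (d:ℝ))) * ENNReal.ofReal (dist p q ^ (-s))) :=
                mul_le_mul_left (le_add_self) _
              _ = _ := by ring
  -- UPPER BOUND
  have hupper : En ≤ Cp + Coff * ENNReal.ofReal D := by
    rw [hEn]
    have hsplit : ∀ p ∈ P, (∑ q ∈ P, I p q) = I p p + ∑ q ∈ P.erase p, I p q :=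
      fun p hp => (Finset.add_sum_erase P (I p) hp).symm
    rw [Finset.sum_congr rfl hsplit, Finset.sum_add_distrib, mul_add]
    have hdiag : ENNReal.ofReal a ^ 2 * ∑ p ∈ P, I p p ≤ Cp := by
      have h1 : ∑ p ∈ P, I p p ≤ ∑ _p ∈ P, Cp * ENNReal.ofReal (r ^ (2 * (d:ℝ) - s)) :=
        Finset.sum_le_sum fun p _ => hpair p p r hr
      calc ENNReal.ofReal a ^ 2 * ∑ p ∈ P, I p p
          ≤ ENNReal.ofReal a ^ 2 * ∑ _p ∈ P, Cp * ENNReal.ofReal (r ^ (2 * (d:ℝ) - s)) :=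
            mul_le_mul_right h1 _
        _ = Cp * (ENNReal.ofReal a ^ 2 *
              ((n:ℝ≥0∞) * ENNReal.ofReal (r ^ (2 * (d:ℝ) - s)))) := by
            rw [Finset.sum_const, hcard, nsmul_eq_mul]
            ring
        _ = Cp := by rw [key1, mul_one]
    have hoff : ENNReal.ofReal a ^ 2 * ∑ p ∈ P, ∑ q ∈ P.erase p, I p q
        ≤ Coff * ENNReal.ofReal D := by
      have h1 : ∑ p ∈ P, ∑ q ∈ P.erase p, I p q ≤
          (Coff * ENNReal.ofReal (r ^ (2 * (d:ℝ)))) *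
            ∑ p ∈ P, ∑ q ∈ P.erase p, ENNReal.ofReal (dist p q ^ (-s)) := by
        rw [Finset.mul_sum]
        apply Finset.sum_le_sum
        intro p hp
        rw [Finset.mul_sum]
        exact Finset.sum_le_sum fun q hq => hoffb p hp q hq
      calc ENNReal.ofReal a ^ 2 * ∑ p ∈ P, ∑ q ∈ P.erase p, I p q
          ≤ ENNReal.ofReal a ^ 2 * ((Coff * ENNReal.ofReal (r ^ (2 * (d:ℝ)))) *
              ENNReal.ofReal S) := by
            rw [← hSenn]
            exact mul_le_mul_right h1 _
        _ = Coff * ((ENNReal.ofReal a ^ 2 * ENNReal.ofReal (r ^ (2 * (d:ℝ)))) *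
              ENNReal.ofReal S) := by ring
        _ = Coff * ENNReal.ofReal D := by
            rw [key2, ← ENNReal.ofReal_mul (by positivity), hD]
    exact add_le_add hdiag hoff
  -- LOWER BOUND
  have hlowpair : ∀ p ∈ P, ∀ q ∈ P.erase p,
      klow * (ENNReal.ofReal (r ^ d * r ^ d) * ENNReal.ofReal (dist p q ^ (-s))) ≤ I p q := by
    intro p hp q hq
    obtain ⟨hrle, hDpos⟩ := hsep' p hp q hq
    calc klow * (ENNReal.ofReal (r ^ d * r ^ d) * ENNReal.ofReal (dist p q ^ (-s)))
        = ENNReal.ofReal ((3:ℝ) ^ (-s) * dist p q ^ (-s)) *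
            (ENNReal.ofReal (r ^ d * r ^ d) * c₀ ^ 2) := by
          rw [hklowdef, ENNReal.ofReal_mul (p := (3:ℝ)^(-s)) (by positivity)]
          ring
      _ ≤ ENNReal.ofReal ((2 * r + dist p q) ^ (-s)) *
            (ENNReal.ofReal (r ^ d * r ^ d) * c₀ ^ 2) :=
          mul_le_mul_left (ENNReal.ofReal_le_ofReal
            (lower_real hs0 hr hDpos hrle)) _
      _ = ENNReal.ofReal ((2 * r + dist p q) ^ (-s)) *
            (volume (Metric.closedBall p r) * volume (Metric.closedBall q r)) := by
          rw [hvol p, hvol q, ENNReal.ofReal_mul (by positivity)]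
          ring
      _ ≤ I p q := pair_lower hd hs0 hr
  have hlower : klow * ENNReal.ofReal D ≤ En := by
    have h1 : ∑ p ∈ P, ∑ q ∈ P.erase p, I p q ≤ ∑ p ∈ P, ∑ q ∈ P, I p q :=
      Finset.sum_le_sum fun p _ => Finset.sum_le_sum_of_subset (Finset.erase_subset p P)
    have h2 : klow * ENNReal.ofReal D ≤
        ENNReal.ofReal a ^ 2 * ∑ p ∈ P, ∑ q ∈ P.erase p, I p q := by
      have h3 : (klow * ENNReal.ofReal ((n:ℝ)⁻¹ ^ 2)) * ENNReal.ofReal S ≤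
          ENNReal.ofReal a ^ 2 * ∑ p ∈ P, ∑ q ∈ P.erase p, I p q := by
        rw [← hSenn, Finset.mul_sum, Finset.mul_sum]
        apply Finset.sum_le_sum
        intro p hp
        rw [Finset.mul_sum, Finset.mul_sum]
        apply Finset.sum_le_sum
        intro q hq
        calc (klow * ENNReal.ofReal ((n:ℝ)⁻¹ ^ 2)) * ENNReal.ofReal (dist p q ^ (-s))
            = (klow * (ENNReal.ofReal a ^ 2 * ENNReal.ofReal (r ^ (2 * (d:ℝ))))) *
                ENNReal.ofReal (dist p q ^ (-s)) := by rw [key2]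
          _ = ENNReal.ofReal a ^ 2 * (klow *
                (ENNReal.ofReal (r ^ d * r ^ d) * ENNReal.ofReal (dist p q ^ (-s)))) := by
              rw [show ENNReal.ofReal (r ^ d * r ^ d)
                = ENNReal.ofReal (r ^ (2 * (d:ℝ))) by rw [rdid hr d]]
              ring
          _ ≤ ENNReal.ofReal a ^ 2 * I p q :=
              mul_le_mul_right (hlowpair p hp q hq) _
      calc klow * ENNReal.ofReal D
          = (klow * ENNReal.ofReal ((n:ℝ)⁻¹ ^ 2)) * ENNReal.ofReal S := by
            rw [hD, ENNReal.ofReal_mul (by positivity)]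
            ring
        _ ≤ _ := h3
    calc klow * ENNReal.ofReal D ≤
        ENNReal.ofReal a ^ 2 * ∑ p ∈ P, ∑ q ∈ P.erase p, I p q := h2
      _ ≤ ENNReal.ofReal a ^ 2 * ∑ p ∈ P, ∑ q ∈ P, I p q := mul_le_mul_right h1 _
      _ = En := hEn.symm
  constructor
  · -- conclude upper
    have hD0 : 0 ≤ D := by rw [hD]; positivity
    calc En ≤ Cp + Coff * ENNReal.ofReal D := hupper
      _ = ENNReal.ofReal Cp.toReal + ENNReal.ofReal Coff.toReal * ENNReal.ofReal D := by
          rw [ENNReal.ofReal_toReal hCp, ENNReal.ofReal_toReal hCoffTop]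
      _ = ENNReal.ofReal (Cp.toReal + Coff.toReal * D) := by
          rw [← ENNReal.ofReal_mul ENNReal.toReal_nonneg,
            ENNReal.ofReal_add ENNReal.toReal_nonneg (by positivity)]
      _ ≤ ENNReal.ofReal (C * (D + 1)) := by
          apply ENNReal.ofReal_le_ofReal
          have h1 : 0 ≤ Cp.toReal := ENNReal.toReal_nonneg
          have h2 : 0 ≤ Coff.toReal := ENNReal.toReal_nonneg
          nlinarith [hCmax1, hD0]
  · -- conclude lower
    have h4 : ENNReal.ofReal D ≤ klow⁻¹ * En := by
      have := mul_le_mul_right hlower klow⁻¹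
      rwa [← mul_assoc, ENNReal.inv_mul_cancel hklow0 hklowTop, one_mul] at this
    have h5 : klow⁻¹ = ENNReal.ofReal ((klow⁻¹).toReal) :=
      (ENNReal.ofReal_toReal (ENNReal.inv_ne_top.mpr hklow0)).symm
    calc ENNReal.ofReal D ≤ klow⁻¹ * En := h4
      _ = ENNReal.ofReal ((klow⁻¹).toReal) * En := by rw [← h5]
      _ ≤ ENNReal.ofReal C * (En + 1) :=
          mul_le_mul' (ENNReal.ofReal_le_ofReal hCmax2) le_self_add
end
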